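/- arXiv:2506.07470 — 3 statements merged into one kernel-verified Lean document; each statement's English description precedes it below -/
import Mathlib

section
/- Nonlinear Kolmogorov weak law of large numbers, upper bound (claim (4)): under the standing assumptions, and assuming that for each n the truncated variables (Y_{n,k}, 1 ≤ k ≤ n) are pairwise nonlinearly independent, i.e. for all i ≠ k and all functions φ, ψ : ℝ → ℝ satisfying |φ(x) − φ(y)| ≤ C(1 + |x|^m + |y|^m)|x − y| for some C > 0 and m ∈ ℕ (and similarly for ψ) one has 𝔼[φ(Y_{n,k}) ψ(Y_{n,i})] = 𝔼[φ(Y_{n,k})] · 𝔼[ψ(Y_{n,i})], it holds that for every ε > 0, V(S_n/n ≥ μ̄_n + ε) → 0 as n → ∞. -/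
open MeasureTheory Filter

noncomputable def upperExp {Ω : Type*} [MeasurableSpace Ω] (Ps : Set (Measure Ω)) (Z : Ω → ℝ) : ℝ :=
  ⨆ P : Ps, ∫ ω, Z ω ∂(P : Measure Ω)

noncomputable def lowerExp {Ω : Type*} [MeasurableSpace Ω] (Ps : Set (Measure Ω)) (Z : Ω → ℝ) : ℝ :=
  ⨅ P : Ps, ∫ ω, Z ω ∂(P : Measure Ω)

noncomputable def upperCap {Ω : Type*} [MeasurableSpace Ω] (Ps : Set (Measure Ω)) (A : Set Ω) : ℝ :=
  ⨆ P : Ps, ((P : Measure Ω) A).toReal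

noncomputable def lowerCap {Ω : Type*} [MeasurableSpace Ω] (Ps : Set (Measure Ω)) (A : Set Ω) : ℝ :=
  ⨅ P : Ps, ((P : Measure Ω) A).toReal

set_option maxHeartbeats 2000000 in
/-- nonlinear Kolmogorov WLLN, upper bound: under the standing
assumptions and pairwise nonlinear independence of the truncated variables,
for every ε > 0, V(Sₙ/n ≥ μ̄ₙ + ε) → 0. -/
theorem nonlinear_wlln_upper
    {Ω : Type*} [MeasurableSpace Ω] (Ps : Set (Measure Ω)) (hne : Ps.Nonempty)
    (hprob : ∀ P ∈ Ps, IsProbabilityMeasure P)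
    (X : ℕ → Ω → ℝ) (hX : ∀ k, Measurable (X k))
    (χ : ℕ → ℝ → ℝ)
    (hχLip : ∀ n, ∃ K : NNReal, LipschitzWith K (χ n))
    (hχone : ∀ n : ℕ, ∀ x : ℝ, |x| ≤ (n : ℝ) → χ n x = 1)
    (hχzero : ∀ n : ℕ, ∀ x : ℝ, (n : ℝ) + 1 ≤ |x| → χ n x = 0)
    (hχrange : ∀ n : ℕ, ∀ x : ℝ, χ n x ∈ Set.Icc (0 : ℝ) 1)
    (Y : ℕ → ℕ → Ω → ℝ) (hY : ∀ n k, Y n k = fun ω => X k ω * χ n |X k ω|)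
    (S : ℕ → Ω → ℝ) (hS : ∀ n, S n = fun ω => ∑ k ∈ Finset.Icc 1 n, X k ω)
    (ψ : ℕ → ℝ → ℝ)
    (hψ : ∀ n : ℕ, ∀ y : ℝ, ψ n y = ∑ k ∈ Finset.Icc 1 n, y * upperCap Ps {ω | (n : ℝ) * y < |X k ω|})
    (hψ0 : ∀ y ∈ Set.Icc (0 : ℝ) 1, Tendsto (fun n => ψ n y) atTop (nhds 0))
    (hUI : UniformIntegrable (fun n : ℕ => ψ n) 1 (volume.restrict (Set.Icc (0 : ℝ) 1)))
    (μp : ℕ → ℕ → ℝ) (hμp : ∀ n k, μp n k = upperExp Ps (Y n k))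
    (μbar : ℕ → ℝ) (hμbar : ∀ n : ℕ, μbar n = (1 / (n : ℝ)) * ∑ k ∈ Finset.Icc 1 n, μp n k)
    (hindep : ∀ n : ℕ, ∀ i ∈ Finset.Icc 1 n, ∀ k ∈ Finset.Icc 1 n, i ≠ k →
      ∀ φ₁ φ₂ : ℝ → ℝ,
      (∃ C : ℝ, 0 < C ∧ ∃ m : ℕ, ∀ x y : ℝ,
        |φ₁ x - φ₁ y| ≤ C * (1 + |x| ^ m + |y| ^ m) * |x - y|) →
      (∃ C : ℝ, 0 < C ∧ ∃ m : ℕ, ∀ x y : ℝ,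
        |φ₂ x - φ₂ y| ≤ C * (1 + |x| ^ m + |y| ^ m) * |x - y|) →
      upperExp Ps (fun ω => φ₁ (Y n k ω) * φ₂ (Y n i ω)) =
        upperExp Ps (fun ω => φ₁ (Y n k ω)) * upperExp Ps (fun ω => φ₂ (Y n i ω)))
    :
    ∀ ε : ℝ, 0 < ε →
      Tendsto (fun n => upperCap Ps {ω | μbar n + ε ≤ S n ω / n}) atTop (nhds 0) := by
  intro ε hε
  haveI : Nonempty Ps := hne.to_subtype
  -- ## basic facts about Y
  have hχmeas : ∀ n, Measurable (χ n) := fun n => (hχLip n).choose_spec.continuous.measurable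
  have hYmeas : ∀ n k, Measurable (Y n k) := by
    intro n k
    rw [hY]
    exact (hX k).mul ((hχmeas n).comp (hX k).abs)
  have hYle : ∀ n k ω, |Y n k ω| ≤ |X k ω| := by
    intro n k ω
    rw [hY]
    simp only [abs_mul]
    have h1 : abs (χ n (abs (X k ω))) ≤ 1 := by
      rw [abs_le]
      exact ⟨by linarith [(hχrange n (abs (X k ω))).1], (hχrange n (abs (X k ω))).2⟩
    have h2 := mul_le_mul_of_nonneg_left h1 (abs_nonneg (X k ω))
    simpa using h2
  have hYbdd : ∀ n k ω, |Y n k ω| ≤ (n:ℝ) + 1 := by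
    intro n k ω
    rcases le_or_gt ((n:ℝ)+1) |X k ω| with h | h
    · rw [hY]
      show |X k ω * χ n (|X k ω|)| ≤ (n:ℝ) + 1
      rw [hχzero n (|X k ω|) (by rwa [abs_abs]), mul_zero, abs_zero]
      positivity
    · exact (hYle n k ω).trans h.le
  -- ## basic facts about upperCap
  have hcapBdd : ∀ A : Set Ω, BddAbove (Set.range fun P : Ps => ((P : Measure Ω) A).toReal) := by
    intro A
    refine ⟨1, ?_⟩
    rintro x ⟨⟨P, hP⟩, rfl⟩
    haveI := hprob P hP
    calc (P A).toReal ≤ (P Set.univ).toReal :=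
          ENNReal.toReal_mono (measure_ne_top _ _) (measure_mono (Set.subset_univ _))
      _ = 1 := by simp
  have hPle : ∀ (A : Set Ω) (P : Measure Ω), P ∈ Ps → (P A).toReal ≤ upperCap Ps A := by
    intro A P hP
    exact le_ciSup (hcapBdd A) ⟨P, hP⟩
  have hcap_nonneg : ∀ A, 0 ≤ upperCap Ps A :=
    fun A => Real.iSup_nonneg fun P => ENNReal.toReal_nonneg
  have hcap_le_one : ∀ A, 0 ≤ upperCap Ps A ∧ upperCap Ps A ≤ 1 := by
    intro A
    refine ⟨hcap_nonneg A, ciSup_le ?_⟩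
    rintro ⟨P, hP⟩
    haveI := hprob P hP
    calc (P A).toReal ≤ (P Set.univ).toReal :=
          ENNReal.toReal_mono (measure_ne_top _ _) (measure_mono (Set.subset_univ _))
      _ = 1 := by simp
  have hcap_mono : ∀ A B : Set Ω, A ⊆ B → upperCap Ps A ≤ upperCap Ps B := by
    intro A B hAB
    refine ciSup_le ?_
    rintro ⟨P, hP⟩
    haveI := hprob P hP
    exact le_trans (ENNReal.toReal_mono (measure_ne_top _ _) (measure_mono hAB)) (hPle B P hP)
  -- ## integral bounds
  have hIntBdd : ∀ (Z : Ω → ℝ) (C : ℝ), Measurable Z → (∀ ω, |Z ω| ≤ C) →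
      ∀ P ∈ Ps, Integrable Z P := by
    intro Z C hZ hC P hP
    haveI := hprob P hP
    exact (integrable_const C).mono' hZ.aestronglyMeasurable
      (ae_of_all _ fun ω => by simpa [Real.norm_eq_abs] using hC ω)
  have hintAbsBdd : ∀ (Z : Ω → ℝ) (C : ℝ), (∀ ω, |Z ω| ≤ C) →
      ∀ P ∈ Ps, |∫ ω, Z ω ∂P| ≤ C := by
    intro Z C hC P hP
    haveI := hprob P hP
    have h := norm_integral_le_of_norm_le_const (μ := P) (f := Z) (C := C)
      (ae_of_all _ fun ω => by simpa [Real.norm_eq_abs] using hC ω)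
    simpa [Real.norm_eq_abs, measure_univ] using h
  -- bddAbove/bddBelow of integral families
  have hBddAboveInt : ∀ (Z : Ω → ℝ) (C : ℝ), (∀ ω, |Z ω| ≤ C) →
      BddAbove (Set.range fun P : Ps => ∫ ω, Z ω ∂(P : Measure Ω)) := by
    intro Z C hC
    refine ⟨C, ?_⟩
    rintro x ⟨⟨P, hP⟩, rfl⟩
    exact (abs_le.1 (hintAbsBdd Z C hC P hP)).2
  have hBddBelowInt : ∀ (Z : Ω → ℝ) (C : ℝ), (∀ ω, |Z ω| ≤ C) →
      BddBelow (Set.range fun P : Ps => ∫ ω, Z ω ∂(P : Measure Ω)) := by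
    intro Z C hC
    refine ⟨-C, ?_⟩
    rintro x ⟨⟨P, hP⟩, rfl⟩
    exact (abs_le.1 (hintAbsBdd Z C hC P hP)).1
  -- constant upper expectation
  have hconst : ∀ c : ℝ, upperExp Ps (fun _ => c) = c := by
    intro c
    unfold upperExp
    have h : (fun P : Ps => ∫ _, c ∂(P : Measure Ω)) = fun _ => c := by
      funext P
      obtain ⟨P, hP⟩ := P
      haveI := hprob P hP
      simp
    rw [h]
    exact ciSup_const
  -- sup of negation
  have hsupneg : ∀ (Z : Ω → ℝ) (C : ℝ), (∀ ω, |Z ω| ≤ C) →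
      upperExp Ps (fun ω => -(Z ω)) = -(⨅ P : Ps, ∫ ω, Z ω ∂(P : Measure Ω)) := by
    intro Z C hC
    unfold upperExp
    have hneg : (fun P : Ps => ∫ ω, -(Z ω) ∂(P : Measure Ω))
        = fun P : Ps => -(∫ ω, Z ω ∂(P : Measure Ω)) := by
      funext P; exact integral_neg _
    rw [hneg]
    have bb : BddBelow (Set.range fun P : Ps => ∫ ω, Z ω ∂(P : Measure Ω)) := hBddBelowInt Z C hC
    have ba : BddAbove (Set.range fun P : Ps => -(∫ ω, Z ω ∂(P : Measure Ω))) := by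
      refine ⟨C, ?_⟩
      rintro x ⟨⟨P, hP⟩, rfl⟩
      have h3 := (abs_le.1 (hintAbsBdd Z C hC P hP)).1
      show -(∫ ω, Z ω ∂P) ≤ C
      linarith
    apply le_antisymm
    · exact ciSup_le fun p => neg_le_neg (ciInf_le bb p)
    · rw [neg_le]
      exact le_ciInf fun p => neg_le.mpr (le_ciSup ba p)
    -- ## growth conditions
  have growth_id : ∃ C : ℝ, 0 < C ∧ ∃ m : ℕ, ∀ x y : ℝ,
      |(fun x : ℝ => x) x - (fun x : ℝ => x) y| ≤ C * (1 + |x| ^ m + |y| ^ m) * |x - y| := by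
    refine ⟨1, one_pos, 0, fun x y => ?_⟩
    simp only [pow_zero]
    nlinarith [abs_nonneg (x - y)]
  have growth_neg : ∃ C : ℝ, 0 < C ∧ ∃ m : ℕ, ∀ x y : ℝ,
      |(fun x : ℝ => -x) x - (fun x : ℝ => -x) y| ≤ C * (1 + |x| ^ m + |y| ^ m) * |x - y| := by
    refine ⟨1, one_pos, 0, fun x y => ?_⟩
    simp only [pow_zero]
    have habs : |-x - -y| = |x - y| := by
      rw [show -x - -y = -(x - y) by ring, abs_neg]
    rw [habs]
    nlinarith [abs_nonneg (x - y)]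
  have growth_const : ∀ c : ℝ, ∃ C : ℝ, 0 < C ∧ ∃ m : ℕ, ∀ x y : ℝ,
      |(fun _ : ℝ => c) x - (fun _ : ℝ => c) y| ≤ C * (1 + |x| ^ m + |y| ^ m) * |x - y| := by
    intro c
    refine ⟨1, one_pos, 0, fun x y => ?_⟩
    simp only [sub_self, abs_zero, pow_zero]
    positivity
  -- ## consequences of independence
  have pick : ∀ n : ℕ, 2 ≤ n → ∀ k ∈ Finset.Icc 1 n, ∃ i ∈ Finset.Icc 1 n, i ≠ k := by
    intro n hn k hk
    rcases eq_or_ne k 1 with rfl | hk1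
    · exact ⟨2, Finset.mem_Icc.2 ⟨one_le_two, hn⟩, by norm_num⟩
    · exact ⟨1, Finset.mem_Icc.2 ⟨le_rfl, le_trans one_le_two hn⟩, Ne.symm hk1⟩
  have factA : ∀ n : ℕ, 2 ≤ n → ∀ k ∈ Finset.Icc 1 n, ∀ P ∈ Ps,
      ∫ ω, Y n k ω ∂P = μp n k := by
    intro n hn k hk P hP
    obtain ⟨i, hi, hik⟩ := pick n hn k hk
    have key := hindep n i hi k hk hik (fun x => x) (fun _ => (-1:ℝ)) growth_id (growth_const (-1))
    have e1 : (fun ω => Y n k ω * (-1)) = fun ω => -(Y n k ω) := by funext ω; ring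
    rw [e1] at key
    have e2 : upperExp Ps (fun _ : Ω => (-1:ℝ)) = -1 := hconst (-1)
    rw [e2] at key
    rw [hsupneg (Y n k) ((n:ℝ)+1) (hYbdd n k)] at key
    have e3 : upperExp Ps (fun ω => Y n k ω) = μp n k := (hμp n k).symm
    rw [e3] at key
    -- key : -(⨅ P : Ps, ∫ ω, Y n k ω ∂P) = μp n k * -1
    have hinf : (⨅ P : Ps, ∫ ω, Y n k ω ∂(P : Measure Ω)) = μp n k := by linarith
    have h1 : ∫ ω, Y n k ω ∂P ≤ μp n k := by
      rw [hμp]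
      exact le_ciSup (hBddAboveInt (Y n k) _ (hYbdd n k)) ⟨P, hP⟩
    have h2 : (⨅ P : Ps, ∫ ω, Y n k ω ∂(P : Measure Ω)) ≤ ∫ ω, Y n k ω ∂P :=
      ciInf_le (hBddBelowInt (Y n k) _ (hYbdd n k)) ⟨P, hP⟩
    linarith
  have factB : ∀ n : ℕ, 2 ≤ n → ∀ k ∈ Finset.Icc 1 n, ∀ i ∈ Finset.Icc 1 n, i ≠ k → ∀ P ∈ Ps,
      ∫ ω, Y n k ω * Y n i ω ∂P = μp n k * μp n i := by
    intro n hn k hk i hi hik P hP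
    have hprodbdd : ∀ ω, |Y n k ω * Y n i ω| ≤ ((n:ℝ)+1) * ((n:ℝ)+1) := by
      intro ω
      rw [abs_mul]
      exact mul_le_mul (hYbdd n k ω) (hYbdd n i ω) (abs_nonneg _) (by positivity)
    have key1 := hindep n i hi k hk hik (fun x => x) (fun x => x) growth_id growth_id
    have key2 := hindep n i hi k hk hik (fun x => -x) (fun x => x) growth_neg growth_id
    have ek : upperExp Ps (fun ω => Y n k ω) = μp n k := (hμp n k).symm
    have ei : upperExp Ps (fun ω => Y n i ω) = μp n i := (hμp n i).symm
    rw [ek, ei] at key1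
    rw [ei] at key2
    have e1 : (fun ω => -(Y n k ω) * Y n i ω) = fun ω => -(Y n k ω * Y n i ω) := by
      funext ω; ring
    rw [e1] at key2
    have hAk : upperExp Ps (fun ω => -(Y n k ω)) = -(μp n k) := by
      rw [hsupneg (Y n k) ((n:ℝ)+1) (hYbdd n k)]
      have hconstfun : (fun P : Ps => ∫ ω, Y n k ω ∂(P : Measure Ω)) = fun _ => μp n k := by
        funext Q
        obtain ⟨Q, hQ⟩ := Q
        exact factA n hn k hk Q hQ
      rw [hconstfun, ciInf_const]
    rw [hAk] at key2
    rw [hsupneg (fun ω => Y n k ω * Y n i ω) (((n:ℝ)+1) * ((n:ℝ)+1)) hprodbdd] at key2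
    -- key1 : ⨆ ∫ YkYi = μp k * μp i ; key2 : -(⨅ ∫ YkYi) = -(μp k) * μp i
    have h1 : ∫ ω, Y n k ω * Y n i ω ∂P ≤ μp n k * μp n i := by
      rw [← key1]
      exact le_ciSup (hBddAboveInt (fun ω => Y n k ω * Y n i ω) _ hprodbdd) ⟨P, hP⟩
    have h2 : (⨅ P : Ps, ∫ ω, Y n k ω * Y n i ω ∂(P : Measure Ω)) ≤ ∫ ω, Y n k ω * Y n i ω ∂P :=
      ciInf_le (hBddBelowInt (fun ω => Y n k ω * Y n i ω) _ hprodbdd) ⟨P, hP⟩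
    have h3 : (⨅ P : Ps, ∫ ω, Y n k ω * Y n i ω ∂(P : Measure Ω)) = μp n k * μp n i := by
      linarith
    linarith
    -- ## Vitali convergence: the integral of ψ n over [0,1] tends to 0
  haveI hIccFin : IsFiniteMeasure (volume.restrict (Set.Icc (0:ℝ) 1)) := by
    constructor
    rw [Measure.restrict_apply_univ]
    simp [Real.volume_Icc]
  have hI1 : Tendsto (fun n => ∫ y in Set.Icc (0:ℝ) 1, ψ n y) atTop (nhds 0) := by
    obtain ⟨hmeas, hunif, C, hC⟩ := hUI
    have hae : ∀ᵐ y ∂(volume.restrict (Set.Icc (0:ℝ) 1)),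
        Tendsto (fun n => ψ n y) atTop (nhds ((fun _ : ℝ => (0:ℝ)) y)) := by
      rw [ae_restrict_iff' measurableSet_Icc]
      exact ae_of_all _ fun y hy => hψ0 y hy
    have hLp := tendsto_Lp_finite_of_tendsto_ae (μ := volume.restrict (Set.Icc (0:ℝ) 1))
      le_rfl ENNReal.one_ne_top hmeas MemLp.zero hunif hae
    simp only [sub_zero] at hLp
    have hLp' : Tendsto (fun n => (eLpNorm (ψ n) 1 (volume.restrict (Set.Icc (0:ℝ) 1))).toReal)
        atTop (nhds 0) := by
      have h := (ENNReal.tendsto_toReal (a := 0) (by simp)).comp hLp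
      exact h
    have habs : ∀ n, |∫ y in Set.Icc (0:ℝ) 1, ψ n y|
        ≤ (eLpNorm (ψ n) 1 (volume.restrict (Set.Icc (0:ℝ) 1))).toReal := by
      intro n
      calc |∫ y in Set.Icc (0:ℝ) 1, ψ n y| ≤ ∫ y in Set.Icc (0:ℝ) 1, ‖ψ n y‖ := by
            simpa [Real.norm_eq_abs] using
              norm_integral_le_integral_norm (μ := volume.restrict (Set.Icc (0:ℝ) 1)) (ψ n)
        _ = (eLpNorm (ψ n) 1 (volume.restrict (Set.Icc (0:ℝ) 1))).toReal := by
            rw [integral_norm_eq_lintegral_enorm (hmeas n), eLpNorm_one_eq_lintegral_enorm]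
    have hsq : Tendsto (fun n => |∫ y in Set.Icc (0:ℝ) 1, ψ n y|) atTop (nhds 0) :=
      squeeze_zero (fun n => abs_nonneg _) habs hLp'
    exact (tendsto_zero_iff_abs_tendsto_zero _).mpr hsq
    -- ## main estimate for n ≥ 2
  have key : ∀ n : ℕ, 2 ≤ n →
      upperCap Ps {ω | μbar n + ε ≤ S n ω / n}
        ≤ (2/ε^2) * ((∫ y in Set.Icc (0:ℝ) 1, ψ n y) + 2 * ψ n 1) + ψ n 1 := by
    intro n hn
    have hnpos : (0:ℝ) < n := by
      have h0 : 0 < n := lt_of_lt_of_le (by norm_num) hn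
      exact_mod_cast h0
    have hn1 : (1:ℝ) ≤ (n:ℝ) := by exact_mod_cast le_trans (by norm_num) hn
    -- measurability of capacity profiles
    have hVmeas : ∀ k : ℕ, Measurable (fun y : ℝ => upperCap Ps {ω | (n:ℝ) * y < |X k ω|}) := by
      intro k
      have hanti : Antitone (fun y : ℝ => upperCap Ps {ω | (n:ℝ) * y < |X k ω|}) := by
        intro y y' hyy'
        apply hcap_mono
        intro ω hω
        simp only [Set.mem_setOf_eq] at hω ⊢
        calc (n:ℝ) * y ≤ (n:ℝ) * y' := mul_le_mul_of_nonneg_left hyy' (le_of_lt hnpos)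
          _ < |X k ω| := hω
      exact hanti.measurable
    have hxVmeas : ∀ k : ℕ, Measurable (fun y : ℝ => y * upperCap Ps {ω | (n:ℝ) * y < |X k ω|}) :=
      fun k => measurable_id.mul (hVmeas k)
    have hIntOnIoc : ∀ (f : ℝ → ℝ) (a b C : ℝ), Measurable f → (∀ x ∈ Set.Ioc a b, |f x| ≤ C) →
        IntegrableOn f (Set.Ioc a b) := by
      intro f a b C hf hC
      haveI : IsFiniteMeasure (volume.restrict (Set.Ioc a b)) := by
        constructor
        rw [Measure.restrict_apply_univ]
        exact measure_Ioc_lt_top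
      refine (integrable_const C).mono' hf.aestronglyMeasurable ?_
      rw [ae_restrict_iff' measurableSet_Ioc]
      exact ae_of_all _ fun x hx => by simpa [Real.norm_eq_abs] using hC x hx
    have hxVIntOn : ∀ (k : ℕ) (a b : ℝ), IntegrableOn
        (fun y : ℝ => y * upperCap Ps {ω | (n:ℝ) * y < |X k ω|}) (Set.Ioc a b) := by
      intro k a b
      apply hIntOnIoc _ a b (max |a| |b|) (hxVmeas k)
      intro x hx
      rw [abs_mul]
      calc |x| * |upperCap Ps {ω | (n:ℝ) * x < |X k ω|}| ≤ |x| * 1 := by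
            refine mul_le_mul_of_nonneg_left ?_ (abs_nonneg _)
            rw [abs_le]
            exact ⟨by linarith [(hcap_le_one {ω | (n:ℝ) * x < |X k ω|}).1],
              (hcap_le_one {ω | (n:ℝ) * x < |X k ω|}).2⟩
        _ = |x| := mul_one _
        _ ≤ max |a| |b| := by
            rcases abs_le_max_abs_abs (le_of_lt hx.1) hx.2 with h
            exact h
    have hψIntOn : ∀ (a b : ℝ), IntegrableOn (ψ n) (Set.Ioc a b) := by
      intro a b
      have hrw : ψ n = fun y => ∑ k ∈ Finset.Icc 1 n, y * upperCap Ps {ω | (n:ℝ) * y < |X k ω|} := by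
        funext y; exact hψ n y
      rw [hrw]
      exact integrable_finset_sum _ (fun k _ => hxVIntOn k a b)
    -- (d) split of the ψ-integral
    have hsplit : (∫ y in Set.Ioc (0:ℝ) 2, ψ n y)
        ≤ (∫ y in Set.Icc (0:ℝ) 1, ψ n y) + 2 * ψ n 1 := by
      have hunion : Set.Ioc (0:ℝ) 1 ∪ Set.Ioc (1:ℝ) 2 = Set.Ioc (0:ℝ) 2 :=
        Set.Ioc_union_Ioc_eq_Ioc zero_le_one one_le_two
      have hdisj : Disjoint (Set.Ioc (0:ℝ) 1) (Set.Ioc (1:ℝ) 2) := Set.Ioc_disjoint_Ioc_of_le le_rfl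
      have heq : (∫ y in Set.Ioc (0:ℝ) 2, ψ n y)
          = (∫ y in Set.Ioc (0:ℝ) 1, ψ n y) + ∫ y in Set.Ioc (1:ℝ) 2, ψ n y := by
        rw [← hunion]
        exact setIntegral_union hdisj measurableSet_Ioc (hψIntOn 0 1) (hψIntOn 1 2)
      have htail : (∫ y in Set.Ioc (1:ℝ) 2, ψ n y) ≤ 2 * ψ n 1 := by
        have hpt : ∀ y ∈ Set.Ioc (1:ℝ) 2, ψ n y ≤ 2 * ψ n 1 := by
          intro y hy
          rw [hψ n y, hψ n 1, Finset.mul_sum]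
          refine Finset.sum_le_sum fun k _ => ?_
          have hcapm : upperCap Ps {ω | (n:ℝ) * y < |X k ω|}
              ≤ upperCap Ps {ω | (n:ℝ) * 1 < |X k ω|} := by
            apply hcap_mono
            intro ω hω
            simp only [Set.mem_setOf_eq] at hω ⊢
            calc (n:ℝ) * 1 ≤ (n:ℝ) * y :=
                  mul_le_mul_of_nonneg_left (le_of_lt hy.1) (le_of_lt hnpos)
              _ < |X k ω| := hω
          calc y * upperCap Ps {ω | (n:ℝ) * y < |X k ω|}
              ≤ 2 * upperCap Ps {ω | (n:ℝ) * y < |X k ω|} :=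
                mul_le_mul_of_nonneg_right hy.2 (hcap_nonneg _)
            _ ≤ 2 * (1 * upperCap Ps {ω | (n:ℝ) * 1 < |X k ω|}) := by
                rw [one_mul]
                exact mul_le_mul_of_nonneg_left hcapm (by norm_num)
        calc (∫ y in Set.Ioc (1:ℝ) 2, ψ n y) ≤ ∫ _ in Set.Ioc (1:ℝ) 2, 2 * ψ n 1 :=
              setIntegral_mono_on (hψIntOn 1 2)
                (integrableOn_const measure_Ioc_lt_top.ne) measurableSet_Ioc hpt
          _ = 2 * ψ n 1 := by
              rw [setIntegral_const]
              simp [Real.volume_Ioc]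
              ring
      have hIccIoc : (∫ y in Set.Icc (0:ℝ) 1, ψ n y) = ∫ y in Set.Ioc (0:ℝ) 1, ψ n y :=
        integral_Icc_eq_integral_Ioc
      linarith
    -- per-measure estimate
    refine ciSup_le ?_
    rintro ⟨P, hP⟩
    haveI := hprob P hP
    -- integrability of the truncated variables under P
    have hYint : ∀ k, Integrable (Y n k) P :=
      fun k => hIntBdd (Y n k) _ (hYmeas n k) (hYbdd n k) P hP
    have hsqmeas : ∀ k : ℕ, Measurable (fun ω => (Y n k ω)^2) := fun k => (hYmeas n k).pow_const 2
    have hsqbdd : ∀ k : ℕ, ∀ ω, |(Y n k ω)^2| ≤ ((n:ℝ)+1)^2 := by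
      intro k ω
      rw [abs_pow, ← sq_abs]
      exact pow_le_pow_left₀ (abs_nonneg _) (by simpa using hYbdd n k ω) 2
    have hsqint : ∀ k : ℕ, Integrable (fun ω => (Y n k ω)^2) P :=
      fun k => hIntBdd _ _ (hsqmeas k) (hsqbdd k) P hP
    -- notation-free local abbreviations
    have hTmeas : Measurable (fun ω => ∑ k ∈ Finset.Icc 1 n, Y n k ω) :=
      Finset.measurable_sum _ (fun k _ => hYmeas n k)
    -- (a) the inclusion
    have hsub : {ω | μbar n + ε ≤ S n ω / n} ⊆
        {ω : Ω | (n:ℝ)*ε ≤ (∑ k ∈ Finset.Icc 1 n, Y n k ω) - ∑ k ∈ Finset.Icc 1 n, μp n k}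
        ∪ ⋃ k ∈ Finset.Icc 1 n, {ω : Ω | (n:ℝ) * 1 < |X k ω|} := by
      intro ω hω
      simp only [Set.mem_setOf_eq] at hω
      by_cases hU : ω ∈ ⋃ k ∈ Finset.Icc 1 n, {ω : Ω | (n:ℝ) * 1 < |X k ω|}
      · exact Or.inr hU
      · left
        rw [Set.mem_iUnion₂] at hU
        push_neg at hU
        have hYX : ∀ k ∈ Finset.Icc 1 n, Y n k ω = X k ω := by
          intro k hk
          have hle : |X k ω| ≤ (n:ℝ) := by
            have := hU k hk
            simp only [Set.mem_setOf_eq, not_lt] at this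
            linarith [this]
          rw [hY]
          show X k ω * χ n (|X k ω|) = X k ω
          rw [hχone n (|X k ω|) (by rwa [abs_abs]), mul_one]
        have hSY : S n ω = ∑ k ∈ Finset.Icc 1 n, Y n k ω := by
          rw [hS]
          exact (Finset.sum_congr rfl fun k hk => (hYX k hk)).symm
        have hωn : (μbar n + ε) * n ≤ S n ω := by
          rw [← le_div_iff₀ hnpos]
          exact hω
        have harith : (μbar n + ε) * n
            = (∑ k ∈ Finset.Icc 1 n, μp n k) + ε * n := by
          rw [hμbar]
          field_simp
        simp only [Set.mem_setOf_eq]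
        rw [← hSY]
        have : (∑ k ∈ Finset.Icc 1 n, μp n k) + ε * n ≤ S n ω := by
          rw [← harith]; exact hωn
        nlinarith [this]
    -- union bound
    have hcapsum : (∑ k ∈ Finset.Icc 1 n, (P {ω : Ω | (n:ℝ) * 1 < |X k ω|}).toReal) ≤ ψ n 1 := by
      rw [hψ n 1]
      refine Finset.sum_le_sum fun k _ => ?_
      rw [one_mul]
      exact hPle _ P hP
    have hunionbd : (P {ω | μbar n + ε ≤ S n ω / n}).toReal
        ≤ (P {ω : Ω | (n:ℝ)*ε ≤ (∑ k ∈ Finset.Icc 1 n, Y n k ω) - ∑ k ∈ Finset.Icc 1 n, μp n k}).toReal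
          + ∑ k ∈ Finset.Icc 1 n, (P {ω : Ω | (n:ℝ) * 1 < |X k ω|}).toReal := by
      have h1 : P {ω | μbar n + ε ≤ S n ω / n}
          ≤ P {ω : Ω | (n:ℝ)*ε ≤ (∑ k ∈ Finset.Icc 1 n, Y n k ω) - ∑ k ∈ Finset.Icc 1 n, μp n k}
            + ∑ k ∈ Finset.Icc 1 n, P {ω : Ω | (n:ℝ) * 1 < |X k ω|} := by
        refine le_trans (measure_mono hsub) (le_trans (measure_union_le _ _) ?_)
        exact add_le_add le_rfl (measure_biUnion_finset_le _ _)
      have hfin : (∑ k ∈ Finset.Icc 1 n, P {ω : Ω | (n:ℝ) * 1 < |X k ω|}) ≠ ⊤ :=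
        (ENNReal.sum_lt_top.2 fun k _ => measure_lt_top _ _).ne
      calc (P {ω | μbar n + ε ≤ S n ω / n}).toReal
          ≤ (P {ω : Ω | (n:ℝ)*ε ≤ (∑ k ∈ Finset.Icc 1 n, Y n k ω) - ∑ k ∈ Finset.Icc 1 n, μp n k}
            + ∑ k ∈ Finset.Icc 1 n, P {ω : Ω | (n:ℝ) * 1 < |X k ω|}).toReal :=
            ENNReal.toReal_mono (ENNReal.add_ne_top.2 ⟨measure_ne_top _ _, hfin⟩) h1
        _ = _ := by
            rw [ENNReal.toReal_add (measure_ne_top _ _) hfin,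
              ENNReal.toReal_sum (fun k _ => measure_ne_top _ _)]
    -- (b) Chebyshev
    have habs_sub : ∀ a b : ℝ, |a - b| ≤ |a| + |b| := fun a b => abs_sub a b
    have hcard : ((Finset.Icc 1 n).card : ℝ) = n := by
      rw [Nat.card_Icc]
      simp
    have hTbdd : ∀ ω, |(∑ k ∈ Finset.Icc 1 n, Y n k ω) - ∑ k ∈ Finset.Icc 1 n, μp n k|
        ≤ (n:ℝ)*((n:ℝ)+1) + |∑ k ∈ Finset.Icc 1 n, μp n k| := by
      intro ω
      refine le_trans (habs_sub _ _) ?_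
      have h1 : |∑ k ∈ Finset.Icc 1 n, Y n k ω| ≤ (n:ℝ)*((n:ℝ)+1) := by
        refine le_trans (Finset.abs_sum_le_sum_abs _ _) ?_
        calc (∑ k ∈ Finset.Icc 1 n, |Y n k ω|) ≤ ∑ k ∈ Finset.Icc 1 n, ((n:ℝ)+1) :=
              Finset.sum_le_sum fun k _ => hYbdd n k ω
          _ = (n:ℝ)*((n:ℝ)+1) := by
              rw [Finset.sum_const, nsmul_eq_mul, hcard]
      linarith
    have hfmeas : Measurable (fun ω =>
        ((∑ k ∈ Finset.Icc 1 n, Y n k ω) - ∑ k ∈ Finset.Icc 1 n, μp n k)^2) :=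
      (hTmeas.sub measurable_const).pow_const 2
    have hfbdd : ∀ ω, |((∑ k ∈ Finset.Icc 1 n, Y n k ω) - ∑ k ∈ Finset.Icc 1 n, μp n k)^2|
        ≤ ((n:ℝ)*((n:ℝ)+1) + |∑ k ∈ Finset.Icc 1 n, μp n k|)^2 := by
      intro ω
      rw [abs_pow, ← sq_abs]
      exact pow_le_pow_left₀ (abs_nonneg _) (by simpa using hTbdd ω) 2
    have hfint : Integrable (fun ω =>
        ((∑ k ∈ Finset.Icc 1 n, Y n k ω) - ∑ k ∈ Finset.Icc 1 n, μp n k)^2) P :=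
      hIntBdd _ _ hfmeas hfbdd P hP
    have hcheb : ((n:ℝ)*ε)^2 * (P {ω : Ω | (n:ℝ)*ε ≤ (∑ k ∈ Finset.Icc 1 n, Y n k ω)
          - ∑ k ∈ Finset.Icc 1 n, μp n k}).toReal
        ≤ ∫ ω, ((∑ k ∈ Finset.Icc 1 n, Y n k ω) - ∑ k ∈ Finset.Icc 1 n, μp n k)^2 ∂P := by
      have hch := mul_meas_ge_le_integral_of_nonneg (μ := P)
        (ae_of_all _ fun ω => sq_nonneg ((∑ k ∈ Finset.Icc 1 n, Y n k ω)
          - ∑ k ∈ Finset.Icc 1 n, μp n k)) hfint (((n:ℝ)*ε)^2)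
      refine le_trans ?_ hch
      refine mul_le_mul_of_nonneg_left ?_ (by positivity)
      refine ENNReal.toReal_mono (measure_ne_top _ _) (measure_mono ?_)
      intro ω hω
      simp only [Set.mem_setOf_eq] at hω ⊢
      exact pow_le_pow_left₀ (by positivity) hω 2
    -- expansion of the second moment of the sum
    have hcross : ∀ k ∈ Finset.Icc 1 n, ∀ i ∈ Finset.Icc 1 n, i ≠ k →
        ∫ ω, (Y n k ω - μp n k) * (Y n i ω - μp n i) ∂P = 0 := by
      intro k hk i hi hik
      have hrw : (fun ω => (Y n k ω - μp n k) * (Y n i ω - μp n i))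
          = fun ω => Y n k ω * Y n i ω - μp n k * Y n i ω - μp n i * Y n k ω
            + μp n k * μp n i := by
        funext ω; ring
      rw [hrw]
      have t1 : Integrable (fun ω => Y n k ω * Y n i ω) P :=
        hIntBdd _ (((n:ℝ)+1)*((n:ℝ)+1)) ((hYmeas n k).mul (hYmeas n i))
          (fun ω => by
            show |Y n k ω * Y n i ω| ≤ _
            rw [abs_mul]
            exact mul_le_mul (hYbdd n k ω) (hYbdd n i ω) (abs_nonneg _) (by positivity)) P hP
      have t2 : Integrable (fun ω => μp n k * Y n i ω) P := (hYint i).const_mul _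
      have t3 : Integrable (fun ω => μp n i * Y n k ω) P := (hYint k).const_mul _
      have t12 : Integrable (fun ω => Y n k ω * Y n i ω - μp n k * Y n i ω) P := t1.sub t2
      have t123 : Integrable (fun ω => Y n k ω * Y n i ω - μp n k * Y n i ω
          - μp n i * Y n k ω) P := t12.sub t3
      rw [integral_add t123 (integrable_const _),
        integral_sub t12 t3, integral_sub t1 t2,
        integral_const_mul, integral_const_mul, integral_const,
        factA n hn k hk P hP, factA n hn i hi P hP, factB n hn k hk i hi hik P hP]
      simp [measure_univ]
      ring
    have hdiag : ∀ k ∈ Finset.Icc 1 n,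
        ∫ ω, (Y n k ω - μp n k) * (Y n k ω - μp n k) ∂P
          = (∫ ω, (Y n k ω)^2 ∂P) - (μp n k)^2 := by
      intro k hk
      have hrw : (fun ω => (Y n k ω - μp n k) * (Y n k ω - μp n k))
          = fun ω => (Y n k ω)^2 - (2 * μp n k) * Y n k ω + μp n k * μp n k := by
        funext ω; ring
      rw [hrw]
      have t2 : Integrable (fun ω => (2 * μp n k) * Y n k ω) P := (hYint k).const_mul _
      have t12 : Integrable (fun ω => (Y n k ω)^2 - (2 * μp n k) * Y n k ω) P := (hsqint k).sub t2
      rw [integral_add t12 (integrable_const _),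
        integral_sub (hsqint k) t2, integral_const_mul, integral_const,
        factA n hn k hk P hP]
      simp [measure_univ]
      ring
    have hDint : ∀ k i : ℕ, Integrable (fun ω => (Y n k ω - μp n k) * (Y n i ω - μp n i)) P := by
      intro k i
      refine hIntBdd _ ((((n:ℝ)+1)+|μp n k|) * (((n:ℝ)+1)+|μp n i|))
        (((hYmeas n k).sub measurable_const).mul ((hYmeas n i).sub measurable_const))
        (fun ω => ?_) P hP
      show |(Y n k ω - μp n k) * (Y n i ω - μp n i)| ≤ _
      rw [abs_mul]
      refine mul_le_mul ?_ ?_ (abs_nonneg _) (by positivity)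
      · exact le_trans (habs_sub _ _) (add_le_add_left (hYbdd n k ω) _)
      · exact le_trans (habs_sub _ _) (add_le_add_left (hYbdd n i ω) _)
    have hexpand : ∫ ω, ((∑ k ∈ Finset.Icc 1 n, Y n k ω) - ∑ k ∈ Finset.Icc 1 n, μp n k)^2 ∂P
        = ∑ k ∈ Finset.Icc 1 n, ((∫ ω, (Y n k ω)^2 ∂P) - (μp n k)^2) := by
      have hrw : (fun ω => ((∑ k ∈ Finset.Icc 1 n, Y n k ω) - ∑ k ∈ Finset.Icc 1 n, μp n k)^2)
          = fun ω => ∑ k ∈ Finset.Icc 1 n, ∑ i ∈ Finset.Icc 1 n,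
              (Y n k ω - μp n k) * (Y n i ω - μp n i) := by
        funext ω
        rw [← Finset.sum_sub_distrib, sq, Finset.sum_mul_sum]
      rw [hrw]
      rw [integral_finset_sum _ (fun k _ => integrable_finset_sum _ (fun i _ => hDint k i))]
      refine Finset.sum_congr rfl fun k hk => ?_
      rw [integral_finset_sum _ (fun i _ => hDint k i)]
      rw [Finset.sum_eq_single_of_mem k hk (fun i hi hik => hcross k hk i hi hik)]
      exact hdiag k hk
    -- (c) layer cake bound for each second moment
    have hlayer : ∀ k ∈ Finset.Icc 1 n, (∫ ω, (Y n k ω)^2 ∂P)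
        ≤ 2*(n:ℝ)^2 * ∫ y in Set.Ioc (0:ℝ) 2, y * upperCap Ps {ω | (n:ℝ) * y < |X k ω|} := by
      intro k _
      have hlc := (hsqint k).integral_eq_integral_meas_lt (ae_of_all _ fun ω => sq_nonneg _)
      -- change of variables t = n² x²
      have himg : (fun x : ℝ => (n:ℝ)^2 * x^2) '' Set.Ioi 0 = Set.Ioi 0 := by
        ext t
        simp only [Set.mem_image, Set.mem_Ioi]
        constructor
        · rintro ⟨x, hx, rfl⟩
          positivity
        · intro ht
          refine ⟨Real.sqrt t / n, ?_, ?_⟩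
          · have h1 : (0:ℝ) < Real.sqrt t := Real.sqrt_pos.2 ht
            positivity
          · simp only [div_pow, Real.sq_sqrt (le_of_lt ht)]
            field_simp
      have hderiv : ∀ x ∈ Set.Ioi (0:ℝ),
          HasDerivWithinAt (fun x : ℝ => (n:ℝ)^2 * x^2) ((n:ℝ)^2 * (2*x)) (Set.Ioi 0) x := by
        intro x _
        have h := (hasDerivAt_pow 2 x).const_mul ((n:ℝ)^2)
        simpa using h.hasDerivWithinAt
      have hinj : Set.InjOn (fun x : ℝ => (n:ℝ)^2 * x^2) (Set.Ioi 0) := by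
        intro a ha b hb hab
        have h2 : a^2 = b^2 := mul_left_cancel₀ (a := (n:ℝ)^2) (by positivity) hab
        calc a = Real.sqrt (a^2) := (Real.sqrt_sq (le_of_lt ha)).symm
          _ = Real.sqrt (b^2) := by rw [h2]
          _ = b := Real.sqrt_sq (le_of_lt hb)
      have hcov := integral_image_eq_integral_abs_deriv_smul measurableSet_Ioi hderiv hinj
        (fun t => (P {a : Ω | t < (Y n k a)^2}).toReal)
      rw [himg] at hcov
      simp only [smul_eq_mul] at hcov
      -- restrict the x-integral to (0,2]
      have hvanish : ∀ x ∈ Set.Ioi (0:ℝ) \ Set.Ioc (0:ℝ) 2,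
          |(n:ℝ)^2 * (2*x)| * (P {a : Ω | (n:ℝ)^2 * x^2 < (Y n k a)^2}).toReal = 0 := by
        intro x hx
        have hx2 : (2:ℝ) < x := by
          rcases hx with ⟨hx1, hx2⟩
          simp only [Set.mem_Ioi] at hx1
          simp only [Set.mem_Ioc, not_and, not_le] at hx2
          by_contra hc
          push_neg at hc
          exact absurd (hx2 hx1) (not_lt.2 hc)
        have hempty : {a : Ω | (n:ℝ)^2 * x^2 < (Y n k a)^2} = ∅ := by
          rw [Set.eq_empty_iff_forall_notMem]
          intro a ha
          simp only [Set.mem_setOf_eq] at ha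
          have hY2 : (Y n k a)^2 ≤ ((n:ℝ)+1)^2 := by
            rw [← sq_abs]
            exact pow_le_pow_left₀ (abs_nonneg _) (hYbdd n k a) 2
          have hx4 : (4:ℝ) ≤ x^2 := by nlinarith
          have h4n : ((n:ℝ)+1)^2 ≤ 4*(n:ℝ)^2 := by nlinarith
          have hfin : 4*(n:ℝ)^2 ≤ (n:ℝ)^2 * x^2 := by nlinarith [sq_nonneg (n:ℝ)]
          linarith
        rw [hempty]
        simp
      have hrestr : (∫ x in Set.Ioi (0:ℝ),
            |(n:ℝ)^2 * (2*x)| * (P {a : Ω | (n:ℝ)^2 * x^2 < (Y n k a)^2}).toReal)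
          = ∫ x in Set.Ioc (0:ℝ) 2,
            |(n:ℝ)^2 * (2*x)| * (P {a : Ω | (n:ℝ)^2 * x^2 < (Y n k a)^2}).toReal :=
        setIntegral_eq_of_subset_of_forall_diff_eq_zero measurableSet_Ioi
          Set.Ioc_subset_Ioi_self hvanish
      -- measurability of the integrand
      have hgmeas : Measurable (fun t : ℝ => (P {a : Ω | t < (Y n k a)^2}).toReal) := by
        have hanti : Antitone (fun t : ℝ => (P {a : Ω | t < (Y n k a)^2}).toReal) := by
          intro t t' htt'
          refine ENNReal.toReal_mono (measure_ne_top _ _) (measure_mono ?_)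
          intro a ha
          simp only [Set.mem_setOf_eq] at ha ⊢
          exact lt_of_le_of_lt htt' ha
        exact hanti.measurable
      have hhmeas : Measurable (fun x : ℝ =>
          |(n:ℝ)^2 * (2*x)| * (P {a : Ω | (n:ℝ)^2 * x^2 < (Y n k a)^2}).toReal) := by
        refine Measurable.mul ?_ ?_
        · exact (measurable_const.mul (measurable_const.mul measurable_id)).abs
        · exact hgmeas.comp (measurable_const.mul (measurable_id.pow_const 2))
      have hg01 : ∀ t : ℝ, 0 ≤ (P {a : Ω | t < (Y n k a)^2}).toReal
          ∧ (P {a : Ω | t < (Y n k a)^2}).toReal ≤ 1 := by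
        intro t
        refine ⟨ENNReal.toReal_nonneg, ?_⟩
        calc (P {a : Ω | t < (Y n k a)^2}).toReal ≤ (P Set.univ).toReal :=
              ENNReal.toReal_mono (measure_ne_top _ _) (measure_mono (Set.subset_univ _))
          _ = 1 := by simp
      have hhIntOn : IntegrableOn (fun x : ℝ =>
          |(n:ℝ)^2 * (2*x)| * (P {a : Ω | (n:ℝ)^2 * x^2 < (Y n k a)^2}).toReal)
          (Set.Ioc (0:ℝ) 2) := by
        refine hIntOnIoc _ 0 2 (4*(n:ℝ)^2) hhmeas ?_
        intro x hx
        rw [abs_mul, abs_abs]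
        have h1 : |(n:ℝ)^2 * (2*x)| ≤ 4*(n:ℝ)^2 := by
          rw [abs_mul]
          have : |(n:ℝ)^2| = (n:ℝ)^2 := abs_of_nonneg (by positivity)
          rw [this, abs_mul]
          have h2 : |(2:ℝ)| = 2 := by norm_num
          rw [h2, abs_of_nonneg (le_of_lt hx.1)]
          nlinarith [hx.2, hx.1]
        have h2 := hg01 ((n:ℝ)^2 * x^2)
        calc |(n:ℝ)^2 * (2*x)| * |(P {a : Ω | (n:ℝ)^2 * x^2 < (Y n k a)^2}).toReal|
            ≤ (4*(n:ℝ)^2) * 1 := by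
              refine mul_le_mul h1 ?_ (abs_nonneg _) (by positivity)
              rw [abs_of_nonneg h2.1]
              exact h2.2
          _ = 4*(n:ℝ)^2 := mul_one _
      -- pointwise comparison on (0,2]
      have hpt : ∀ x ∈ Set.Ioc (0:ℝ) 2,
          |(n:ℝ)^2 * (2*x)| * (P {a : Ω | (n:ℝ)^2 * x^2 < (Y n k a)^2}).toReal
            ≤ 2*(n:ℝ)^2 * (x * upperCap Ps {ω | (n:ℝ) * x < |X k ω|}) := by
        intro x hx
        have hsubset : {a : Ω | (n:ℝ)^2 * x^2 < (Y n k a)^2} ⊆ {ω : Ω | (n:ℝ) * x < |X k ω|} := by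
          intro a ha
          simp only [Set.mem_setOf_eq] at ha ⊢
          have hYX2 : (Y n k a)^2 ≤ |X k a|^2 := by
            rw [← sq_abs]
            exact pow_le_pow_left₀ (abs_nonneg _) (hYle n k a) 2
          by_contra hc
          push_neg at hc
          have h5 : |X k a|^2 ≤ ((n:ℝ)*x)^2 := pow_le_pow_left₀ (abs_nonneg _) hc 2
          have h6 : ((n:ℝ)*x)^2 = (n:ℝ)^2 * x^2 := by ring
          linarith
        have hgle : (P {a : Ω | (n:ℝ)^2 * x^2 < (Y n k a)^2}).toReal
            ≤ upperCap Ps {ω : Ω | (n:ℝ) * x < |X k ω|} :=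
          le_trans (ENNReal.toReal_mono (measure_ne_top _ _) (measure_mono hsubset))
            (hPle _ P hP)
        have hxx : (0:ℝ) ≤ (n:ℝ)^2 * (2*x) := by nlinarith [hx.1, sq_nonneg (n:ℝ)]
        rw [abs_of_nonneg hxx]
        calc (n:ℝ)^2 * (2*x) * (P {a : Ω | (n:ℝ)^2 * x^2 < (Y n k a)^2}).toReal
            ≤ (n:ℝ)^2 * (2*x) * upperCap Ps {ω : Ω | (n:ℝ) * x < |X k ω|} := by
              refine mul_le_mul_of_nonneg_left hgle ?_
              have hx0 := hx.1
              have : (0:ℝ) ≤ (n:ℝ)^2 := by positivity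
              nlinarith
          _ = 2*(n:ℝ)^2 * (x * upperCap Ps {ω : Ω | (n:ℝ) * x < |X k ω|}) := by ring
      have hmajIntOn : IntegrableOn (fun x : ℝ =>
          2*(n:ℝ)^2 * (x * upperCap Ps {ω | (n:ℝ) * x < |X k ω|})) (Set.Ioc (0:ℝ) 2) :=
        (hxVIntOn k 0 2).const_mul _
      calc (∫ ω, (Y n k ω)^2 ∂P)
          = ∫ t in Set.Ioi (0:ℝ), (P {a : Ω | t < (Y n k a)^2}).toReal := hlc
        _ = ∫ x in Set.Ioc (0:ℝ) 2,
              |(n:ℝ)^2 * (2*x)| * (P {a : Ω | (n:ℝ)^2 * x^2 < (Y n k a)^2}).toReal := by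
            rw [hcov]
            exact hrestr
        _ ≤ ∫ x in Set.Ioc (0:ℝ) 2,
              2*(n:ℝ)^2 * (x * upperCap Ps {ω | (n:ℝ) * x < |X k ω|}) :=
            setIntegral_mono_on hhIntOn hmajIntOn measurableSet_Ioc hpt
        _ = 2*(n:ℝ)^2 * ∫ x in Set.Ioc (0:ℝ) 2,
              x * upperCap Ps {ω | (n:ℝ) * x < |X k ω|} := integral_const_mul _ _
    -- sum the layer-cake bounds
    have hquad : (∑ k ∈ Finset.Icc 1 n, ∫ ω, (Y n k ω)^2 ∂P)
        ≤ 2*(n:ℝ)^2 * ∫ y in Set.Ioc (0:ℝ) 2, ψ n y := by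
      have hψint : (∫ y in Set.Ioc (0:ℝ) 2, ψ n y)
          = ∑ k ∈ Finset.Icc 1 n, ∫ y in Set.Ioc (0:ℝ) 2,
            y * upperCap Ps {ω | (n:ℝ) * y < |X k ω|} := by
        have hrw : ∀ᵐ y ∂(volume.restrict (Set.Ioc (0:ℝ) 2)), ψ n y
            = ∑ k ∈ Finset.Icc 1 n, y * upperCap Ps {ω | (n:ℝ) * y < |X k ω|} :=
          ae_of_all _ fun y => hψ n y
        rw [integral_congr_ae hrw]
        exact integral_finset_sum _ (fun k _ => hxVIntOn k 0 2)
      calc (∑ k ∈ Finset.Icc 1 n, ∫ ω, (Y n k ω)^2 ∂P)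
          ≤ ∑ k ∈ Finset.Icc 1 n, 2*(n:ℝ)^2 * ∫ y in Set.Ioc (0:ℝ) 2,
              y * upperCap Ps {ω | (n:ℝ) * y < |X k ω|} :=
            Finset.sum_le_sum fun k hk => hlayer k hk
        _ = 2*(n:ℝ)^2 * ∑ k ∈ Finset.Icc 1 n, ∫ y in Set.Ioc (0:ℝ) 2,
              y * upperCap Ps {ω | (n:ℝ) * y < |X k ω|} := by rw [Finset.mul_sum]
        _ = 2*(n:ℝ)^2 * ∫ y in Set.Ioc (0:ℝ) 2, ψ n y := by rw [hψint]
    -- combine everything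
    have hn0 : (n:ℝ) ≠ 0 := ne_of_gt hnpos
    have hε0 : ε ≠ 0 := ne_of_gt hε
    have hBle : (P {ω : Ω | (n:ℝ)*ε ≤ (∑ k ∈ Finset.Icc 1 n, Y n k ω)
          - ∑ k ∈ Finset.Icc 1 n, μp n k}).toReal
        ≤ (2/ε^2) * ((∫ y in Set.Icc (0:ℝ) 1, ψ n y) + 2 * ψ n 1) := by
      have hc2 : (0:ℝ) < ((n:ℝ)*ε)^2 := by positivity
      have hsum : (∫ ω, ((∑ k ∈ Finset.Icc 1 n, Y n k ω)
            - ∑ k ∈ Finset.Icc 1 n, μp n k)^2 ∂P)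
          ≤ 2*(n:ℝ)^2 * ∫ y in Set.Ioc (0:ℝ) 2, ψ n y := by
        rw [hexpand]
        refine le_trans (Finset.sum_le_sum (g := fun k => ∫ ω, (Y n k ω)^2 ∂P)
          fun k _ => ?_) hquad
        nlinarith [sq_nonneg (μp n k)]
      have h1 : (P {ω : Ω | (n:ℝ)*ε ≤ (∑ k ∈ Finset.Icc 1 n, Y n k ω)
            - ∑ k ∈ Finset.Icc 1 n, μp n k}).toReal
          ≤ (2*(n:ℝ)^2 * ∫ y in Set.Ioc (0:ℝ) 2, ψ n y) / ((n:ℝ)*ε)^2 := by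
        rw [le_div_iff₀ hc2]
        calc (P {ω : Ω | (n:ℝ)*ε ≤ (∑ k ∈ Finset.Icc 1 n, Y n k ω)
              - ∑ k ∈ Finset.Icc 1 n, μp n k}).toReal * ((n:ℝ)*ε)^2
            = ((n:ℝ)*ε)^2 * (P {ω : Ω | (n:ℝ)*ε ≤ (∑ k ∈ Finset.Icc 1 n, Y n k ω)
              - ∑ k ∈ Finset.Icc 1 n, μp n k}).toReal := mul_comm _ _
          _ ≤ ∫ ω, ((∑ k ∈ Finset.Icc 1 n, Y n k ω)
              - ∑ k ∈ Finset.Icc 1 n, μp n k)^2 ∂P := hcheb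
          _ ≤ 2*(n:ℝ)^2 * ∫ y in Set.Ioc (0:ℝ) 2, ψ n y := hsum
      have h2 : (2*(n:ℝ)^2 * ∫ y in Set.Ioc (0:ℝ) 2, ψ n y) / ((n:ℝ)*ε)^2
          = (2/ε^2) * ∫ y in Set.Ioc (0:ℝ) 2, ψ n y := by
        field_simp
      have h3 : (2/ε^2) * (∫ y in Set.Ioc (0:ℝ) 2, ψ n y)
          ≤ (2/ε^2) * ((∫ y in Set.Icc (0:ℝ) 1, ψ n y) + 2 * ψ n 1) := by
        refine mul_le_mul_of_nonneg_left hsplit ?_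
        positivity
      rw [h2] at h1
      linarith
    show (P {ω | μbar n + ε ≤ S n ω / n}).toReal
        ≤ (2/ε^2) * ((∫ y in Set.Icc (0:ℝ) 1, ψ n y) + 2 * ψ n 1) + ψ n 1
    linarith [hunionbd, hcapsum, hBle]
  -- ## conclusion
  have hψ1 : Tendsto (fun n => ψ n 1) atTop (nhds 0) := hψ0 1 (by norm_num)
  have hb : Tendsto (fun n => (2/ε^2) * ((∫ y in Set.Icc (0:ℝ) 1, ψ n y) + 2 * ψ n 1) + ψ n 1)
      atTop (nhds 0) := by
    have h1 := ((hI1.add (hψ1.const_mul 2)).const_mul (2/ε^2)).add hψ1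
    simpa using h1
  refine tendsto_of_tendsto_of_tendsto_of_le_of_le' tendsto_const_nhds hb ?_ ?_
  · exact Eventually.of_forall fun n => hcap_nonneg _
  · exact eventually_atTop.2 ⟨2, fun n hn => key n hn⟩
end

section
/- Nonlinear Kolmogorov weak law of large numbers, lower bound (claim (5)): under the standing assumptions, and assuming that for each n the truncated variables (Y_{n,k}, 1 ≤ k ≤ n) are pairwise nonlinearly independent, i.e. for all i ≠ k and all functions φ, ψ : ℝ → ℝ satisfying |φ(x) − φ(y)| ≤ C(1 + |x|^m + |y|^m)|x − y| for some C > 0 and m ∈ ℕ (and similarly for ψ) one has 𝔼[φ(Y_{n,k}) ψ(Y_{n,i})] = 𝔼[φ(Y_{n,k})] · 𝔼[ψ(Y_{n,i})], it holds that for every ε > 0, V(S_n/n ≤ μ̲_n − ε) → 0 as n → ∞. -/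
open MeasureTheory Filter

section Aux

variable {Ω : Type*} [MeasurableSpace Ω] {Ps : Set (Measure Ω)}

lemma toReal_meas_le_one {P : Measure Ω} (hP : IsProbabilityMeasure P) (A : Set Ω) :
    (P A).toReal ≤ 1 := by
  have h1 : P A ≤ 1 := prob_le_one
  have := ENNReal.toReal_mono (by simp) h1
  simpa using this

lemma le_upperCap (hprob : ∀ P ∈ Ps, IsProbabilityMeasure P) {P : Measure Ω} (hP : P ∈ Ps)
    (A : Set Ω) : (P A).toReal ≤ upperCap Ps A := by
  refine le_ciSup (f := fun P : Ps => ((P : Measure Ω) A).toReal) ⟨1, ?_⟩ (⟨P, hP⟩ : Ps)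
  rintro x ⟨Q, rfl⟩
  exact toReal_meas_le_one (hprob Q Q.2) A

lemma upperCap_le (hne : Ps.Nonempty) {A : Set Ω} {c : ℝ}
    (h : ∀ P ∈ Ps, (P A).toReal ≤ c) : upperCap Ps A ≤ c := by
  haveI := hne.to_subtype
  exact ciSup_le fun P => h P P.2

lemma upperCap_nonneg (hne : Ps.Nonempty) (hprob : ∀ P ∈ Ps, IsProbabilityMeasure P)
    (A : Set Ω) : 0 ≤ upperCap Ps A :=
  ENNReal.toReal_nonneg.trans (le_upperCap hprob hne.choose_spec A)

lemma upperCap_subadd (hne : Ps.Nonempty) (hprob : ∀ P ∈ Ps, IsProbabilityMeasure P)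
    {A B : Set Ω} {s : Finset ℕ} {C : ℕ → Set Ω}
    (h : A ⊆ B ∪ ⋃ k ∈ s, C k) :
    upperCap Ps A ≤ upperCap Ps B + ∑ k ∈ s, upperCap Ps (C k) := by
  apply upperCap_le hne
  intro P hP
  haveI := hprob P hP
  have h1 : P A ≤ P B + ∑ k ∈ s, P (C k) := by
    refine (measure_mono h).trans ?_
    refine (measure_union_le _ _).trans ?_
    exact add_le_add le_rfl (measure_biUnion_finset_le s C)
  have h2 : (P A).toReal ≤ (P B + ∑ k ∈ s, P (C k)).toReal := by
    refine ENNReal.toReal_mono ?_ h1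
    refine ENNReal.add_ne_top.mpr ⟨measure_ne_top _ _, ?_⟩
    exact (ENNReal.sum_lt_top.mpr fun k _ => measure_lt_top _ _).ne
  rw [ENNReal.toReal_add (measure_ne_top _ _)
      (ENNReal.sum_lt_top.mpr fun k _ => measure_lt_top _ _).ne,
    ENNReal.toReal_sum (fun k _ => measure_ne_top _ _)] at h2
  refine h2.trans (add_le_add (le_upperCap hprob hP B) ?_)
  exact Finset.sum_le_sum fun k _ => le_upperCap hprob hP (C k)

lemma le_upperExp {f : Ω → ℝ} {c : ℝ} (hb : ∀ Q ∈ Ps, ∫ ω, f ω ∂Q ≤ c)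
    {P : Measure Ω} (hP : P ∈ Ps) : ∫ ω, f ω ∂P ≤ upperExp Ps f := by
  refine le_ciSup (f := fun P : Ps => ∫ ω, f ω ∂(P : Measure Ω)) ⟨c, ?_⟩ (⟨P, hP⟩ : Ps)
  rintro x ⟨Q, rfl⟩
  exact hb Q Q.2

lemma upperExp_le (hne : Ps.Nonempty) {f : Ω → ℝ} {c : ℝ}
    (h : ∀ P ∈ Ps, ∫ ω, f ω ∂P ≤ c) : upperExp Ps f ≤ c := by
  haveI := hne.to_subtype
  exact ciSup_le fun P => h P P.2

lemma le_lowerExp (hne : Ps.Nonempty) {f : Ω → ℝ} {c : ℝ}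
    (h : ∀ P ∈ Ps, c ≤ ∫ ω, f ω ∂P) : c ≤ lowerExp Ps f := by
  haveI := hne.to_subtype
  exact le_ciInf fun P => h P P.2

lemma lowerExp_le {f : Ω → ℝ} {c : ℝ} (hb : ∀ Q ∈ Ps, c ≤ ∫ ω, f ω ∂Q)
    {P : Measure Ω} (hP : P ∈ Ps) : lowerExp Ps f ≤ ∫ ω, f ω ∂P := by
  refine ciInf_le (f := fun P : Ps => ∫ ω, f ω ∂(P : Measure Ω)) ⟨c, ?_⟩ (⟨P, hP⟩ : Ps)
  rintro x ⟨Q, rfl⟩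
  exact hb Q Q.2

lemma upperExp_const_sub (hne : Ps.Nonempty) (hprob : ∀ P ∈ Ps, IsProbabilityMeasure P)
    {f : Ω → ℝ} (c : ℝ) {m : ℝ}
    (hint : ∀ P ∈ Ps, Integrable f P) (hlb : ∀ P ∈ Ps, m ≤ ∫ ω, f ω ∂P) :
    upperExp Ps (fun ω => c - f ω) = c - lowerExp Ps f := by
  haveI := hne.to_subtype
  have hconst : ∀ P : Ps, ∫ ω, (c - f ω) ∂(P : Measure Ω) = c - ∫ ω, f ω ∂(P : Measure Ω) := by
    intro P
    haveI := hprob P P.2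
    rw [integral_sub (integrable_const c) (hint P P.2), integral_const]
    simp
  have hbb : BddBelow (Set.range fun P : Ps => ∫ ω, f ω ∂(P : Measure Ω)) := by
    refine ⟨m, ?_⟩
    rintro x ⟨Q, rfl⟩
    exact hlb Q Q.2
  have hba : BddAbove (Set.range fun P : Ps => c - ∫ ω, f ω ∂(P : Measure Ω)) := by
    refine ⟨c - m, ?_⟩
    rintro x ⟨Q, rfl⟩
    have := hlb Q Q.2
    simp only
    linarith
  unfold upperExp lowerExp
  simp_rw [hconst]
  apply le_antisymm
  · exact ciSup_le fun P => sub_le_sub_left (ciInf_le hbb P) c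
  · have h2 : ∀ P : Ps, c - (⨆ P : Ps, (c - ∫ ω, f ω ∂(P : Measure Ω))) ≤
        ∫ ω, f ω ∂(P : Measure Ω) := by
      intro P
      have := le_ciSup hba P
      linarith
    have := le_ciInf h2
    linarith

end Aux

set_option maxHeartbeats 2000000

/-- nonlinear Kolmogorov WLLN, lower bound: under the standing
assumptions and pairwise nonlinear independence of the truncated variables,
for every ε > 0, V(Sₙ/n ≤ μ̲ₙ − ε) → 0. -/
theorem nonlinear_wlln_lower
    {Ω : Type*} [MeasurableSpace Ω] (Ps : Set (Measure Ω)) (hne : Ps.Nonempty)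
    (hprob : ∀ P ∈ Ps, IsProbabilityMeasure P)
    (X : ℕ → Ω → ℝ) (hX : ∀ k, Measurable (X k))
    (χ : ℕ → ℝ → ℝ)
    (hχLip : ∀ n, ∃ K : NNReal, LipschitzWith K (χ n))
    (hχone : ∀ n : ℕ, ∀ x : ℝ, |x| ≤ (n : ℝ) → χ n x = 1)
    (hχzero : ∀ n : ℕ, ∀ x : ℝ, (n : ℝ) + 1 ≤ |x| → χ n x = 0)
    (hχrange : ∀ n : ℕ, ∀ x : ℝ, χ n x ∈ Set.Icc (0 : ℝ) 1)
    (Y : ℕ → ℕ → Ω → ℝ) (hY : ∀ n k, Y n k = fun ω => X k ω * χ n |X k ω|)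
    (S : ℕ → Ω → ℝ) (hS : ∀ n, S n = fun ω => ∑ k ∈ Finset.Icc 1 n, X k ω)
    (ψ : ℕ → ℝ → ℝ)
    (hψ : ∀ n : ℕ, ∀ y : ℝ, ψ n y = ∑ k ∈ Finset.Icc 1 n, y * upperCap Ps {ω | (n : ℝ) * y < |X k ω|})
    (hψ0 : ∀ y ∈ Set.Icc (0 : ℝ) 1, Tendsto (fun n => ψ n y) atTop (nhds 0))
    (hUI : UniformIntegrable (fun n : ℕ => ψ n) 1 (volume.restrict (Set.Icc (0 : ℝ) 1)))
    (μm : ℕ → ℕ → ℝ) (hμm : ∀ n k, μm n k = lowerExp Ps (Y n k))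
    (μlow : ℕ → ℝ) (hμlow : ∀ n : ℕ, μlow n = (1 / (n : ℝ)) * ∑ k ∈ Finset.Icc 1 n, μm n k)
    (hindep : ∀ n : ℕ, ∀ i ∈ Finset.Icc 1 n, ∀ k ∈ Finset.Icc 1 n, i ≠ k →
      ∀ φ₁ φ₂ : ℝ → ℝ,
      (∃ C : ℝ, 0 < C ∧ ∃ m : ℕ, ∀ x y : ℝ,
        |φ₁ x - φ₁ y| ≤ C * (1 + |x| ^ m + |y| ^ m) * |x - y|) →
      (∃ C : ℝ, 0 < C ∧ ∃ m : ℕ, ∀ x y : ℝ,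
        |φ₂ x - φ₂ y| ≤ C * (1 + |x| ^ m + |y| ^ m) * |x - y|) →
      upperExp Ps (fun ω => φ₁ (Y n k ω) * φ₂ (Y n i ω)) =
        upperExp Ps (fun ω => φ₁ (Y n k ω)) * upperExp Ps (fun ω => φ₂ (Y n i ω)))
    :
    ∀ ε : ℝ, 0 < ε →
      Tendsto (fun n => upperCap Ps {ω | S n ω / n ≤ μlow n - ε}) atTop (nhds 0) := by
  intro ε hε
  obtain ⟨P₀, hP₀⟩ := hne
  have hne : Ps.Nonempty := ⟨P₀, hP₀⟩
  -- the family of tail capacities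
  set V : ℕ → ℝ → ℝ := fun k t => upperCap Ps {ω | t < |X k ω|} with hV
  have hVant : ∀ k, Antitone (V k) := by
    intro k s t hst
    apply upperCap_le hne
    intro P hP
    haveI := hprob P hP
    refine le_trans ?_ (le_upperCap hprob hP {ω | s < |X k ω|})
    exact ENNReal.toReal_mono (measure_ne_top _ _)
      (measure_mono fun ω hω => lt_of_le_of_lt hst hω)
  have hVnn : ∀ k t, 0 ≤ V k t := fun k t => upperCap_nonneg hne hprob _
  have hVle1 : ∀ k t, V k t ≤ 1 := fun k t =>
    upperCap_le hne fun P hP => toReal_meas_le_one (hprob P hP) _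
  have hVmeas : ∀ k, Measurable (V k) := fun k => (hVant k).measurable
  -- generic integrability of bounded measurable functions
  have hintP : ∀ P ∈ Ps, ∀ (f : Ω → ℝ) (_ : Measurable f) (C : ℝ) (_ : ∀ ω, |f ω| ≤ C),
      Integrable f P := by
    intro P hP f hf C hC
    haveI := hprob P hP
    exact (integrable_const C).mono' hf.aestronglyMeasurable
      (Eventually.of_forall (by simpa [Real.norm_eq_abs] using hC))
  -- key finite-n bound
  have key : ∀ n : ℕ, 1 ≤ n →
      upperCap Ps {ω | S n ω / n ≤ μlow n - ε} ≤
        (8 / ε ^ 2) * ((∫ y in Set.Ioc (0:ℝ) 1, ψ n y) + ψ n 1 * (2 / (n:ℝ))) + ψ n 1 := by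
    intro n hn
    have hn0 : (0:ℝ) < n := by exact_mod_cast hn
    set I := Finset.Icc 1 n with hI
    set Z : ℕ → Ω → ℝ := fun k ω => μm n k - Y n k ω with hZ
    set T : Ω → ℝ := fun ω => ∑ k ∈ I, Z k ω with hT
    have hχcont : Continuous (χ n) := (hχLip n).choose_spec.continuous
    have hYmeas : ∀ k, Measurable (Y n k) := by
      intro k
      rw [hY]
      exact (hX k).mul (hχcont.measurable.comp (hX k).abs)
    have hYabs : ∀ k ω, |Y n k ω| ≤ |X k ω| := by
      intro k ω
      simp only [hY]
      have h1 := (hχrange n |X k ω|).1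
      have h2 := (hχrange n |X k ω|).2
      rw [abs_mul, abs_of_nonneg h1]
      have := mul_le_mul_of_nonneg_left h2 (abs_nonneg (X k ω))
      simpa using this
    have hYbd : ∀ k ω, |Y n k ω| ≤ (n:ℝ) + 1 := by
      intro k ω
      by_cases h : (n:ℝ) + 1 ≤ |X k ω|
      · have h0 : Y n k ω = 0 := by
          simp only [hY]
          rw [hχzero n (abs (X k ω)) (by rwa [abs_abs]), mul_zero]
        rw [h0, abs_zero]
        positivity
      · push_neg at h
        exact (hYabs k ω).trans h.le
    have hYsqbd : ∀ k ω, (Y n k ω) ^ 2 ≤ ((n:ℝ) + 1) ^ 2 := by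
      intro k ω
      have := pow_le_pow_left₀ (abs_nonneg (Y n k ω)) (hYbd k ω) 2
      rwa [sq_abs] at this
    have hEb : ∀ P ∈ Ps, ∀ k, |∫ ω, Y n k ω ∂P| ≤ (n:ℝ) + 1 := by
      intro P hP k
      haveI := hprob P hP
      have hIY : Integrable (Y n k) P := hintP P hP _ (hYmeas k) _ (hYbd k)
      have habs : |∫ ω, Y n k ω ∂P| ≤ ∫ ω, |Y n k ω| ∂P := by
        have := norm_integral_le_integral_norm (μ := P) (Y n k)
        simpa [Real.norm_eq_abs] using this
      calc |∫ ω, Y n k ω ∂P| ≤ ∫ ω, |Y n k ω| ∂P := habs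
        _ ≤ ∫ _ω, ((n:ℝ) + 1) ∂P := by
            refine integral_mono hIY.abs (integrable_const _) ?_
            intro ω; exact hYbd k ω
        _ = (n:ℝ) + 1 := by simp
    have hμmbd : ∀ k, |μm n k| ≤ (n:ℝ) + 1 := by
      intro k
      rw [hμm, abs_le]
      constructor
      · exact le_lowerExp hne fun P hP => (abs_le.mp (hEb P hP k)).1
      · exact (lowerExp_le (fun Q hQ => (abs_le.mp (hEb Q hQ k)).1) hP₀).trans
          (abs_le.mp (hEb P₀ hP₀ k)).2
    have hZmeas : ∀ k, Measurable (Z k) := by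
      intro k
      simp only [hZ]
      exact measurable_const.sub (hYmeas k)
    have hZbd : ∀ k ω, |Z k ω| ≤ 2 * ((n:ℝ) + 1) := by
      intro k ω
      simp only [hZ]
      have h1 := abs_le.mp (hμmbd k)
      have h2 := abs_le.mp (hYbd k ω)
      rw [abs_le]
      constructor <;> [linarith; linarith]
    -- M k : the upper expectation of Y²
    set M : ℕ → ℝ := fun k => upperExp Ps (fun ω => (Y n k ω) ^ 2) with hM
    have hMbd : ∀ P ∈ Ps, ∀ k, ∫ ω, (Y n k ω) ^ 2 ∂P ≤ ((n:ℝ) + 1) ^ 2 := by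
      intro P hP k
      haveI := hprob P hP
      calc ∫ ω, (Y n k ω) ^ 2 ∂P ≤ ∫ _ω, ((n:ℝ) + 1) ^ 2 ∂P := by
            refine integral_mono
              (hintP P hP _ ((hYmeas k).pow_const 2) (((n:ℝ)+1)^2)
                (fun ω => by rw [abs_pow, sq_abs]; exact hYsqbd k ω)) (integrable_const _) ?_
            intro ω; exact hYsqbd k ω
        _ = ((n:ℝ) + 1) ^ 2 := by simp
    have hMle : ∀ P ∈ Ps, ∀ k, ∫ ω, (Y n k ω) ^ 2 ∂P ≤ M k := fun P hP k =>
      le_upperExp (fun Q hQ => hMbd Q hQ k) hP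
    have hM0 : ∀ k, 0 ≤ M k := fun k =>
      (integral_nonneg fun ω => sq_nonneg _).trans (hMle P₀ hP₀ k)
    -- Cauchy–Schwarz per measure
    have hvar : ∀ P ∈ Ps, ∀ k, (∫ ω, Y n k ω ∂P) ^ 2 ≤ ∫ ω, (Y n k ω) ^ 2 ∂P := by
      intro P hP k
      haveI := hprob P hP
      set m := ∫ ω, Y n k ω ∂P with hm
      have hIY : Integrable (Y n k) P := hintP P hP _ (hYmeas k) _ (hYbd k)
      have hIY2 : Integrable (fun ω => (Y n k ω) ^ 2) P :=
        hintP P hP _ ((hYmeas k).pow_const 2) (((n:ℝ)+1)^2)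
          (fun ω => by rw [abs_pow, sq_abs]; exact hYsqbd k ω)
      have hIsub : Integrable (fun ω => (Y n k ω) ^ 2 - (2 * m) * Y n k ω) P :=
        hIY2.sub (hIY.const_mul (2 * m))
      have h0 : 0 ≤ ∫ ω, (Y n k ω - m) ^ 2 ∂P := integral_nonneg fun ω => sq_nonneg _
      have hfn : (fun ω => (Y n k ω - m) ^ 2) =
          fun ω => ((Y n k ω) ^ 2 - (2 * m) * Y n k ω) + m ^ 2 :=
        funext fun ω => by ring
      rw [hfn] at h0
      have hsplit : ∫ ω, (((Y n k ω) ^ 2 - (2 * m) * Y n k ω) + m ^ 2) ∂P =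
          (∫ ω, ((Y n k ω) ^ 2 - (2 * m) * Y n k ω) ∂P) + ∫ _ω, m ^ 2 ∂P :=
        integral_add hIsub (integrable_const _)
      have hsplit2 : ∫ ω, ((Y n k ω) ^ 2 - (2 * m) * Y n k ω) ∂P =
          (∫ ω, (Y n k ω) ^ 2 ∂P) - ∫ ω, (2 * m) * Y n k ω ∂P :=
        integral_sub hIY2 (hIY.const_mul (2 * m))
      have hmul : ∫ ω, (2 * m) * Y n k ω ∂P = (2 * m) * m := by
        rw [integral_const_mul, ← hm]
      have hconst : ∫ _ω : Ω, m ^ 2 ∂P = m ^ 2 := by simp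
      rw [hsplit, hsplit2, hmul, hconst] at h0
      nlinarith [h0]
    have hμmsq : ∀ k, (μm n k) ^ 2 ≤ M k := by
      intro k
      have habs : ∀ P ∈ Ps, |∫ ω, Y n k ω ∂P| ≤ Real.sqrt (M k) := fun P hP =>
        Real.abs_le_sqrt ((hvar P hP k).trans (hMle P hP k))
      have h1 : -(Real.sqrt (M k)) ≤ μm n k := by
        rw [hμm]
        exact le_lowerExp hne fun P hP => (abs_le.mp (habs P hP)).1
      have h2 : μm n k ≤ Real.sqrt (M k) := by
        rw [hμm]
        exact (lowerExp_le (fun Q hQ => (abs_le.mp (habs Q hQ)).1) hP₀).trans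
          (abs_le.mp (habs P₀ hP₀)).2
      calc (μm n k) ^ 2 ≤ (Real.sqrt (M k)) ^ 2 := sq_le_sq' h1 h2
        _ = M k := Real.sq_sqrt (hM0 k)
    -- integrability of t * V k t on Ioc 0 (n+1)
    have hdom_int : ∀ k, IntegrableOn (fun t => t * V k t) (Set.Ioc (0:ℝ) ((n:ℝ)+1)) volume := by
      intro k
      refine Measure.integrableOn_of_bounded (M := (n:ℝ)+1) ?_ ?_ ?_
      · rw [Real.volume_Ioc]; exact ENNReal.ofReal_ne_top
      · exact (measurable_id.mul (hVmeas k)).aestronglyMeasurable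
      · filter_upwards [ae_restrict_mem measurableSet_Ioc] with t ht
        rw [Real.norm_eq_abs, abs_mul, abs_of_pos ht.1, abs_of_nonneg (hVnn k t)]
        calc t * V k t ≤ ((n:ℝ)+1) * 1 :=
              mul_le_mul ht.2 (hVle1 k t) (hVnn k t) (by positivity)
          _ = (n:ℝ)+1 := mul_one _
    -- layer cake bound for each k
    have hlayer : ∀ k, M k ≤ 2 * ∫ t in Set.Ioc (0:ℝ) ((n:ℝ)+1), t * V k t := by
      intro k
      rw [hM]
      apply upperExp_le hne
      intro P hP
      haveI := hprob P hP
      have hIY2 : Integrable (fun ω => (Y n k ω) ^ 2) P :=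
        hintP P hP _ ((hYmeas k).pow_const 2) (((n:ℝ)+1)^2)
          (fun ω => by rw [abs_pow, sq_abs]; exact hYsqbd k ω)
      have hlc := hIY2.integral_eq_integral_meas_lt (Eventually.of_forall fun ω => sq_nonneg _)
      set p : ℝ → ℝ := fun t => (P {a | t < (Y n k a) ^ 2}).toReal with hp
      have hpant : Antitone p := by
        intro s t hst
        exact ENNReal.toReal_mono (measure_ne_top _ _)
          (measure_mono fun a ha => lt_of_le_of_lt hst ha)
      have hpzero : ∀ t, ((n:ℝ)+1) ^ 2 ≤ t → p t = 0 := by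
        intro t ht
        simp only [hp]
        have : {a | t < (Y n k a) ^ 2} = ∅ := by
          rw [Set.eq_empty_iff_forall_notMem]
          intro a ha
          exact absurd ha (not_lt.mpr ((hYsqbd k a).trans ht))
        rw [this, measure_empty, ENNReal.toReal_zero]
      have hp_int1 : IntegrableOn p (Set.Ioc (0:ℝ) (((n:ℝ)+1) ^ 2)) volume := by
        refine Measure.integrableOn_of_bounded (M := 1) ?_ ?_ ?_
        · rw [Real.volume_Ioc]; exact ENNReal.ofReal_ne_top
        · exact (hpant.measurable).aestronglyMeasurable
        · refine Eventually.of_forall fun t => ?_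
          rw [Real.norm_eq_abs, abs_of_nonneg ENNReal.toReal_nonneg]
          exact toReal_meas_le_one (hprob P hP) _
      have hp_int2 : IntegrableOn p (Set.Ioi (((n:ℝ)+1) ^ 2)) volume := by
        refine (integrableOn_congr_fun (fun t ht => hpzero t (le_of_lt ht)) measurableSet_Ioi).mpr ?_
        exact integrableOn_zero
      have hval2 : ∫ t in Set.Ioi (((n:ℝ)+1) ^ 2), p t = 0 := by
        rw [setIntegral_congr_fun measurableSet_Ioi fun t ht => hpzero t (le_of_lt ht)]
        simp
      have hsplit : Set.Ioc (0:ℝ) (((n:ℝ)+1) ^ 2) ∪ Set.Ioi (((n:ℝ)+1) ^ 2) = Set.Ioi (0:ℝ) :=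
        Set.Ioc_union_Ioi_eq_Ioi (by positivity)
      have heq : ∫ t in Set.Ioi (0:ℝ), p t = ∫ t in Set.Ioc (0:ℝ) (((n:ℝ)+1) ^ 2), p t := by
        rw [← hsplit, setIntegral_union (Set.Ioc_disjoint_Ioi le_rfl) measurableSet_Ioi
          hp_int1 hp_int2, hval2, add_zero]
      -- integrability of V k ∘ sqrt
      have hVs_meas : Measurable fun t : ℝ => V k (Real.sqrt t) := by
        have : Antitone fun t : ℝ => V k (Real.sqrt t) := fun s t hst =>
          hVant k (Real.sqrt_le_sqrt hst)
        exact this.measurable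
      have hVs_int : IntegrableOn (fun t => V k (Real.sqrt t))
          (Set.Ioc (0:ℝ) (((n:ℝ)+1) ^ 2)) volume := by
        refine Measure.integrableOn_of_bounded (M := 1) ?_ hVs_meas.aestronglyMeasurable ?_
        · rw [Real.volume_Ioc]; exact ENNReal.ofReal_ne_top
        · refine Eventually.of_forall fun t => ?_
          rw [Real.norm_eq_abs, abs_of_nonneg (hVnn k _)]
          exact hVle1 k _
      have hcomp : ∫ t in Set.Ioc (0:ℝ) (((n:ℝ)+1) ^ 2), p t ≤
          ∫ t in Set.Ioc (0:ℝ) (((n:ℝ)+1) ^ 2), V k (Real.sqrt t) := by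
        refine setIntegral_mono_on hp_int1 hVs_int measurableSet_Ioc ?_
        intro t ht
        have hset : {a | t < (Y n k a) ^ 2} = {a | Real.sqrt t < |Y n k a|} := by
          ext a
          simp only [Set.mem_setOf_eq]
          rw [← Real.sqrt_sq_eq_abs, Real.sqrt_lt_sqrt_iff ht.1.le]
        simp only [hp, hset]
        refine le_trans ?_ (le_upperCap hprob hP {ω | Real.sqrt t < |X k ω|})
        exact ENNReal.toReal_mono (measure_ne_top _ _)
          (measure_mono fun a ha => lt_of_lt_of_le ha (hYabs k a))
      -- change of variables t = x²
      have himg : (fun x : ℝ => x ^ 2) '' Set.Ioc 0 ((n:ℝ)+1) = Set.Ioc 0 (((n:ℝ)+1) ^ 2) := by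
        ext u
        constructor
        · rintro ⟨x, hx, rfl⟩
          exact ⟨pow_pos hx.1 2, pow_le_pow_left₀ hx.1.le hx.2 2⟩
        · intro hu
          refine ⟨Real.sqrt u, ⟨Real.sqrt_pos.mpr hu.1, ?_⟩, Real.sq_sqrt hu.1.le⟩
          calc Real.sqrt u ≤ Real.sqrt (((n:ℝ)+1) ^ 2) := Real.sqrt_le_sqrt hu.2
            _ = (n:ℝ)+1 := Real.sqrt_sq (by positivity)
      have hderiv : ∀ x ∈ Set.Ioc (0:ℝ) ((n:ℝ)+1),
          HasDerivWithinAt (fun x : ℝ => x ^ 2) ((fun x : ℝ => 2 * x) x) (Set.Ioc (0:ℝ) ((n:ℝ)+1)) x := by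
        intro x _
        simpa using (hasDerivAt_pow 2 x).hasDerivWithinAt
      have hinj : Set.InjOn (fun x : ℝ => x ^ 2) (Set.Ioc (0:ℝ) ((n:ℝ)+1)) := by
        intro a ha b hb h
        have : |a| = |b| := by
          rw [← Real.sqrt_sq_eq_abs, ← Real.sqrt_sq_eq_abs]
          simp only at h
          rw [h]
        rwa [abs_of_pos ha.1, abs_of_pos hb.1] at this
      have hCoV : ∫ t in Set.Ioc (0:ℝ) (((n:ℝ)+1) ^ 2), V k (Real.sqrt t) =
          ∫ x in Set.Ioc (0:ℝ) ((n:ℝ)+1), 2 * (x * V k x) := by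
        rw [← himg, integral_image_eq_integral_abs_deriv_smul measurableSet_Ioc hderiv hinj]
        refine setIntegral_congr_fun measurableSet_Ioc fun x hx => ?_
        simp only [smul_eq_mul]
        rw [Real.sqrt_sq hx.1.le, abs_of_pos (by linarith [hx.1] : (0:ℝ) < 2 * x)]
        ring
      calc ∫ ω, (Y n k ω) ^ 2 ∂P = ∫ t in Set.Ioi (0:ℝ), p t := hlc
        _ = ∫ t in Set.Ioc (0:ℝ) (((n:ℝ)+1) ^ 2), p t := heq
        _ ≤ ∫ t in Set.Ioc (0:ℝ) (((n:ℝ)+1) ^ 2), V k (Real.sqrt t) := hcomp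
        _ = ∫ x in Set.Ioc (0:ℝ) ((n:ℝ)+1), 2 * (x * V k x) := hCoV
        _ = 2 * ∫ x in Set.Ioc (0:ℝ) ((n:ℝ)+1), x * V k x := by rw [integral_const_mul]
    -- sum over k
    set W : ℝ → ℝ := fun t => ∑ k ∈ I, V k t with hW
    have hWmeas : Measurable W := by
      simp only [hW]
      exact Finset.measurable_sum _ fun k _ => hVmeas k
    have hWnn : ∀ t, 0 ≤ W t := fun t => Finset.sum_nonneg fun k _ => hVnn k t
    have hWbd : ∀ t, W t ≤ n := by
      intro t
      simp only [hW]
      calc ∑ k ∈ I, V k t ≤ ∑ _k ∈ I, (1:ℝ) := Finset.sum_le_sum fun k _ => hVle1 k t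
        _ = (I.card : ℝ) := by simp
        _ = n := by rw [hI, Nat.card_Icc]; simp
    have hWant : Antitone W := by
      intro s t hst
      exact Finset.sum_le_sum fun k _ => hVant k hst
    have hsumlayer : ∑ k ∈ I, M k ≤ 2 * ∫ t in Set.Ioc (0:ℝ) ((n:ℝ)+1), t * W t := by
      calc ∑ k ∈ I, M k ≤ ∑ k ∈ I, 2 * ∫ t in Set.Ioc (0:ℝ) ((n:ℝ)+1), t * V k t :=
            Finset.sum_le_sum fun k _ => hlayer k
        _ = 2 * ∑ k ∈ I, ∫ t in Set.Ioc (0:ℝ) ((n:ℝ)+1), t * V k t := by rw [Finset.mul_sum]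
        _ = 2 * ∫ t in Set.Ioc (0:ℝ) ((n:ℝ)+1), t * W t := by
            congr 1
            rw [← integral_finset_sum _ fun k _ => hdom_int k]
            refine setIntegral_congr_fun measurableSet_Ioc fun t _ => ?_
            simp only [hW]
            rw [Finset.mul_sum]
    -- change of variables t = n y
    have hψW : ∀ y : ℝ, ψ n y = y * W ((n:ℝ) * y) := by
      intro y
      rw [hψ]
      simp only [hW, hV]
      rw [Finset.mul_sum]
    have hCoV2 : ∫ t in Set.Ioc (0:ℝ) ((n:ℝ)+1), t * W t =
        (n:ℝ) ^ 2 * ∫ y in Set.Ioc (0:ℝ) (((n:ℝ)+1)/(n:ℝ)), ψ n y := by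
      have himg2 : (fun y : ℝ => (n:ℝ) * y) '' Set.Ioc 0 (((n:ℝ)+1)/(n:ℝ)) =
          Set.Ioc 0 ((n:ℝ)+1) := by
        ext t
        constructor
        · rintro ⟨y, hy, rfl⟩
          refine ⟨mul_pos hn0 hy.1, ?_⟩
          calc (n:ℝ) * y ≤ (n:ℝ) * (((n:ℝ)+1)/(n:ℝ)) := mul_le_mul_of_nonneg_left hy.2 hn0.le
            _ = (n:ℝ)+1 := by field_simp
        · intro ht
          refine ⟨t / (n:ℝ), ⟨div_pos ht.1 hn0, (div_le_div_iff_of_pos_right hn0).mpr ht.2⟩, ?_⟩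
          field_simp
      have hderiv2 : ∀ y ∈ Set.Ioc (0:ℝ) (((n:ℝ)+1)/(n:ℝ)),
          HasDerivWithinAt (fun y : ℝ => (n:ℝ) * y) ((fun _ : ℝ => (n:ℝ)) y)
            (Set.Ioc (0:ℝ) (((n:ℝ)+1)/(n:ℝ))) y := by
        intro y _
        simpa using ((hasDerivAt_id y).const_mul (n:ℝ)).hasDerivWithinAt
      have hinj2 : Set.InjOn (fun y : ℝ => (n:ℝ) * y) (Set.Ioc (0:ℝ) (((n:ℝ)+1)/(n:ℝ))) :=
        fun a _ b _ h => mul_left_cancel₀ hn0.ne' h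
      rw [← himg2, integral_image_eq_integral_abs_deriv_smul measurableSet_Ioc hderiv2 hinj2,
        ← integral_const_mul]
      refine setIntegral_congr_fun measurableSet_Ioc fun y _ => ?_
      simp only [smul_eq_mul]
      rw [abs_of_pos hn0, hψW y]
      ring
    -- split the ψ integral
    have hone_le : (1:ℝ) ≤ ((n:ℝ)+1)/(n:ℝ) := by
      rw [le_div_iff₀ hn0]
      linarith
    have hle_two : ((n:ℝ)+1)/(n:ℝ) ≤ 2 := by
      rw [div_le_iff₀ hn0]
      have : (1:ℝ) ≤ (n:ℝ) := by exact_mod_cast hn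
      linarith
    have hψmeas : Measurable (ψ n) := by
      have : ψ n = fun y => y * W ((n:ℝ) * y) := funext hψW
      rw [this]
      exact measurable_id.mul (hWmeas.comp (measurable_const_mul _))
    have hψint1 : IntegrableOn (ψ n) (Set.Ioc (0:ℝ) 1) volume := by
      refine Measure.integrableOn_of_bounded (M := (n:ℝ)) ?_ hψmeas.aestronglyMeasurable ?_
      · rw [Real.volume_Ioc]; exact ENNReal.ofReal_ne_top
      · filter_upwards [ae_restrict_mem measurableSet_Ioc] with y hy
        rw [Real.norm_eq_abs, hψW, abs_mul, abs_of_pos hy.1, abs_of_nonneg (hWnn _)]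
        calc y * W ((n:ℝ)*y) ≤ 1 * (n:ℝ) :=
              mul_le_mul hy.2 (hWbd _) (hWnn _) zero_le_one
          _ = (n:ℝ) := one_mul _
    have hψint2 : IntegrableOn (ψ n) (Set.Ioc (1:ℝ) (((n:ℝ)+1)/(n:ℝ))) volume := by
      refine Measure.integrableOn_of_bounded (M := 2*(n:ℝ)) ?_ hψmeas.aestronglyMeasurable ?_
      · rw [Real.volume_Ioc]; exact ENNReal.ofReal_ne_top
      · filter_upwards [ae_restrict_mem measurableSet_Ioc] with y hy
        have hy0 : (0:ℝ) < y := lt_trans one_pos hy.1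
        rw [Real.norm_eq_abs, hψW, abs_mul, abs_of_pos hy0, abs_of_nonneg (hWnn _)]
        calc y * W ((n:ℝ)*y) ≤ 2 * (n:ℝ) :=
              mul_le_mul (hy.2.trans hle_two) (hWbd _) (hWnn _) (by norm_num)
          _ = 2*(n:ℝ) := rfl
    have hsplitψ : ∫ y in Set.Ioc (0:ℝ) (((n:ℝ)+1)/(n:ℝ)), ψ n y =
        (∫ y in Set.Ioc (0:ℝ) 1, ψ n y) + ∫ y in Set.Ioc (1:ℝ) (((n:ℝ)+1)/(n:ℝ)), ψ n y := by
      rw [← Set.Ioc_union_Ioc_eq_Ioc zero_le_one hone_le,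
        setIntegral_union (Set.Ioc_disjoint_Ioc_of_le le_rfl) measurableSet_Ioc hψint1 hψint2]
    have hψ1nn : 0 ≤ ψ n 1 := by
      rw [hψW]
      exact mul_nonneg zero_le_one (hWnn _)
    have hWn1 : W ((n:ℝ)) = ψ n 1 := by
      rw [hψW]
      simp
    have hpiece2 : ∫ y in Set.Ioc (1:ℝ) (((n:ℝ)+1)/(n:ℝ)), ψ n y ≤ ψ n 1 * (2/(n:ℝ)) := by
      have hptw : ∀ y ∈ Set.Ioc (1:ℝ) (((n:ℝ)+1)/(n:ℝ)), ψ n y ≤ 2 * ψ n 1 := by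
        intro y hy
        rw [hψW]
        have hWle : W ((n:ℝ)*y) ≤ W (n:ℝ) := hWant (le_mul_of_one_le_right hn0.le hy.1.le)
        calc y * W ((n:ℝ)*y) ≤ 2 * W (n:ℝ) :=
              mul_le_mul (hy.2.trans hle_two) hWle (hWnn _) (by norm_num)
          _ = 2 * ψ n 1 := by rw [hWn1]
      calc ∫ y in Set.Ioc (1:ℝ) (((n:ℝ)+1)/(n:ℝ)), ψ n y
          ≤ ∫ _y in Set.Ioc (1:ℝ) (((n:ℝ)+1)/(n:ℝ)), (2 * ψ n 1) :=
            setIntegral_mono_on hψint2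
              (integrableOn_const (by rw [Real.volume_Ioc]; exact ENNReal.ofReal_ne_top))
              measurableSet_Ioc hptw
        _ = (volume (Set.Ioc (1:ℝ) (((n:ℝ)+1)/(n:ℝ)))).toReal * (2 * ψ n 1) := by
            rw [setIntegral_const, smul_eq_mul]; rfl
        _ = (1/(n:ℝ)) * (2 * ψ n 1) := by
            rw [Real.volume_Ioc, ENNReal.toReal_ofReal (by linarith)]
            congr 1
            field_simp
            ring
        _ = ψ n 1 * (2/(n:ℝ)) := by ring
    -- vanishing of the cross terms
    have hcross0 : ∀ i ∈ I, ∀ k ∈ I, i ≠ k →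
        upperExp Ps (fun ω => Z i ω * Z k ω) = 0 := by
      intro i hi k hk hik
      have hlip : ∀ c : ℝ, ∃ C : ℝ, 0 < C ∧ ∃ m : ℕ, ∀ x y : ℝ,
          |(fun x => c - x) x - (fun x => c - x) y| ≤ C * (1 + |x| ^ m + |y| ^ m) * |x - y| := by
        intro c
        refine ⟨1, one_pos, 0, fun x y => ?_⟩
        simp only [pow_zero]
        have h1 : (c - x) - (c - y) = -(x - y) := by ring
        rw [h1, abs_neg]
        nlinarith [abs_nonneg (x - y)]
      have h := hindep n k hk i hi (Ne.symm hik)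
        (fun x => μm n i - x) (fun x => μm n k - x) (hlip _) (hlip _)
      have e1 : upperExp Ps (fun ω => μm n i - Y n i ω) = 0 := by
        rw [upperExp_const_sub hne hprob (μm n i)
          (fun P hP => hintP P hP _ (hYmeas i) _ (hYbd i))
          (fun P hP => (abs_le.mp (hEb P hP i)).1), hμm, sub_self]
      have e2 : upperExp Ps (fun ω => μm n k - Y n k ω) = 0 := by
        rw [upperExp_const_sub hne hprob (μm n k)
          (fun P hP => hintP P hP _ (hYmeas k) _ (hYbd k))
          (fun P hP => (abs_le.mp (hEb P hP k)).1), hμm, sub_self]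
      simp only [hZ]
      refine h.trans ?_
      show upperExp Ps (fun ω => μm n i - Y n i ω) * upperExp Ps (fun ω => μm n k - Y n k ω) = 0
      rw [e1, zero_mul]
    have hZZbd : ∀ Q ∈ Ps, ∀ i k, ∫ ω, Z i ω * Z k ω ∂Q ≤ (2*((n:ℝ)+1))^2 := by
      intro Q hQ i k
      haveI := hprob Q hQ
      have hpt : ∀ ω, Z i ω * Z k ω ≤ (2*((n:ℝ)+1))^2 := by
        intro ω
        have h1 := hZbd i ω
        have h2 := hZbd k ω
        calc Z i ω * Z k ω ≤ |Z i ω * Z k ω| := le_abs_self _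
          _ = |Z i ω| * |Z k ω| := abs_mul _ _
          _ ≤ (2*((n:ℝ)+1)) * (2*((n:ℝ)+1)) :=
              mul_le_mul h1 h2 (abs_nonneg _) (by positivity)
          _ = (2*((n:ℝ)+1))^2 := (sq _).symm
      have hint : Integrable (fun ω => Z i ω * Z k ω) Q :=
        hintP Q hQ _ ((hZmeas i).mul (hZmeas k)) ((2*((n:ℝ)+1))^2)
          (fun ω => by
            rw [abs_mul]
            calc |Z i ω| * |Z k ω| ≤ (2*((n:ℝ)+1)) * (2*((n:ℝ)+1)) :=
                  mul_le_mul (hZbd i ω) (hZbd k ω) (abs_nonneg _) (by positivity)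
              _ = (2*((n:ℝ)+1))^2 := (sq _).symm)
      calc ∫ ω, Z i ω * Z k ω ∂Q ≤ ∫ _ω, (2*((n:ℝ)+1))^2 ∂Q :=
            integral_mono hint (integrable_const _) hpt
        _ = (2*((n:ℝ)+1))^2 := by simp
    have hdiag : ∀ P ∈ Ps, ∀ k, ∫ ω, Z k ω * Z k ω ∂P ≤ 4 * M k := by
      intro P hP k
      haveI := hprob P hP
      have hIY2 : Integrable (fun ω => (Y n k ω) ^ 2) P :=
        hintP P hP _ ((hYmeas k).pow_const 2) (((n:ℝ)+1)^2)
          (fun ω => by rw [abs_pow, sq_abs]; exact hYsqbd k ω)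
      have hZZint : Integrable (fun ω => Z k ω * Z k ω) P :=
        hintP P hP _ ((hZmeas k).mul (hZmeas k)) ((2*((n:ℝ)+1))^2)
          (fun ω => by
            rw [abs_mul]
            calc |Z k ω| * |Z k ω| ≤ (2*((n:ℝ)+1)) * (2*((n:ℝ)+1)) :=
                  mul_le_mul (hZbd k ω) (hZbd k ω) (abs_nonneg _) (by positivity)
              _ = (2*((n:ℝ)+1))^2 := (sq _).symm)
      have hpt : ∀ ω, Z k ω * Z k ω ≤ 2*(μm n k)^2 + 2*(Y n k ω)^2 := by
        intro ω
        simp only [hZ]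
        nlinarith [sq_nonneg (μm n k + Y n k ω)]
      calc ∫ ω, Z k ω * Z k ω ∂P ≤ ∫ ω, (2*(μm n k)^2 + 2*(Y n k ω)^2) ∂P :=
            integral_mono hZZint ((integrable_const (2*(μm n k)^2)).add (hIY2.const_mul 2)) hpt
        _ = 2*(μm n k)^2 + 2 * ∫ ω, (Y n k ω)^2 ∂P := by
            rw [integral_add (integrable_const _) (hIY2.const_mul 2), integral_const,
              integral_const_mul]
            simp
        _ ≤ 2 * M k + 2 * M k := by
            have h1 := hμmsq k
            have h2 := hMle P hP k
            linarith
        _ = 4 * M k := by ring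
    -- Chebyshev
    have hTmeas : Measurable T := by
      simp only [hT]
      exact Finset.measurable_sum _ fun k _ => hZmeas k
    have hTbd : ∀ ω, |T ω| ≤ (n:ℝ) * (2*((n:ℝ)+1)) := by
      intro ω
      simp only [hT]
      calc |∑ k ∈ I, Z k ω| ≤ ∑ k ∈ I, |Z k ω| := Finset.abs_sum_le_sum_abs _ _
        _ ≤ ∑ _k ∈ I, (2*((n:ℝ)+1)) := Finset.sum_le_sum fun k _ => hZbd k _
        _ = (I.card : ℝ) * (2*((n:ℝ)+1)) := by rw [Finset.sum_const, nsmul_eq_mul]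
        _ = (n:ℝ) * (2*((n:ℝ)+1)) := by rw [hI, Nat.card_Icc]; simp
    have hcheb : ∀ P ∈ Ps, ((n:ℝ)*ε)^2 * (P {ω | (n:ℝ)*ε ≤ T ω}).toReal ≤
        ∑ k ∈ I, (4 * M k) := by
      intro P hP
      haveI := hprob P hP
      have hZZint : ∀ i k, Integrable (fun ω => Z i ω * Z k ω) P := by
        intro i k
        refine hintP P hP _ ((hZmeas i).mul (hZmeas k)) ((2*((n:ℝ)+1))^2) fun ω => ?_
        rw [abs_mul]
        calc |Z i ω| * |Z k ω| ≤ (2*((n:ℝ)+1)) * (2*((n:ℝ)+1)) :=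
              mul_le_mul (hZbd i ω) (hZbd k ω) (abs_nonneg _) (by positivity)
          _ = (2*((n:ℝ)+1))^2 := (sq _).symm
      have hT2int : Integrable (fun ω => T ω ^ 2) P := by
        refine hintP P hP _ (hTmeas.pow_const 2) (((n:ℝ)*(2*((n:ℝ)+1)))^2) fun ω => ?_
        rw [abs_pow]
        calc |T ω| ^ 2 ≤ ((n:ℝ)*(2*((n:ℝ)+1))) ^ 2 :=
              pow_le_pow_left₀ (abs_nonneg _) (hTbd ω) 2
          _ = _ := rfl
      have h1 : ((n:ℝ)*ε)^2 * (P {ω | ((n:ℝ)*ε)^2 ≤ T ω ^ 2}).toReal ≤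
          ∫ ω, T ω ^ 2 ∂P :=
        mul_meas_ge_le_integral_of_nonneg (Eventually.of_forall fun ω => sq_nonneg _) hT2int _
      have hsub : {ω | (n:ℝ)*ε ≤ T ω} ⊆ {ω | ((n:ℝ)*ε)^2 ≤ T ω ^ 2} := by
        intro ω hω
        have hω' : (n:ℝ)*ε ≤ T ω := hω
        have hnε : (0:ℝ) ≤ (n:ℝ)*ε := by positivity
        exact pow_le_pow_left₀ hnε hω' 2
      have h0 : ((n:ℝ)*ε)^2 * (P {ω | (n:ℝ)*ε ≤ T ω}).toReal ≤
          ((n:ℝ)*ε)^2 * (P {ω | ((n:ℝ)*ε)^2 ≤ T ω ^ 2}).toReal := by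
        refine mul_le_mul_of_nonneg_left ?_ (by positivity)
        exact ENNReal.toReal_mono (measure_ne_top _ _) (measure_mono hsub)
      have hexp : ∫ ω, T ω ^ 2 ∂P = ∑ i ∈ I, ∑ k ∈ I, ∫ ω, Z i ω * Z k ω ∂P := by
        have hfn : (fun ω => T ω ^ 2) = fun ω => ∑ i ∈ I, ∑ k ∈ I, Z i ω * Z k ω := by
          funext ω
          simp only [hT]
          rw [sq, Finset.sum_mul_sum]
        rw [hfn, integral_finset_sum _ fun i _ =>
          integrable_finset_sum _ fun k _ => hZZint i k]
        exact Finset.sum_congr rfl fun i _ => integral_finset_sum _ fun k _ => hZZint i k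
      have hterm : ∀ i ∈ I, ∑ k ∈ I, ∫ ω, Z i ω * Z k ω ∂P ≤ 4 * M i := by
        intro i hi
        have hstep : ∑ k ∈ I, ∫ ω, Z i ω * Z k ω ∂P ≤
            ∑ k ∈ I, (if i = k then 4 * M k else 0) := by
          refine Finset.sum_le_sum fun k hk => ?_
          by_cases hik : i = k
          · subst hik
            simp only [if_pos rfl]
            exact hdiag P hP i
          · simp only [if_neg hik]
            calc ∫ ω, Z i ω * Z k ω ∂P ≤ upperExp Ps (fun ω => Z i ω * Z k ω) :=
                  le_upperExp (fun Q hQ => hZZbd Q hQ i k) hP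
              _ = 0 := hcross0 i hi k hk hik
        rw [Finset.sum_ite_eq I i (fun k => 4 * M k), if_pos hi] at hstep
        exact hstep
      calc ((n:ℝ)*ε)^2 * (P {ω | (n:ℝ)*ε ≤ T ω}).toReal
          ≤ ∫ ω, T ω ^ 2 ∂P := h0.trans h1
        _ = ∑ i ∈ I, ∑ k ∈ I, ∫ ω, Z i ω * Z k ω ∂P := hexp
        _ ≤ ∑ i ∈ I, (4 * M i) := Finset.sum_le_sum hterm
    -- the capacity bound for the T-event
    have hC0 : 0 ≤ (∫ y in Set.Ioc (0:ℝ) 1, ψ n y) + ψ n 1 * (2/(n:ℝ)) := by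
      have h1 : 0 ≤ ∫ y in Set.Ioc (0:ℝ) 1, ψ n y := by
        refine setIntegral_nonneg measurableSet_Ioc fun y hy => ?_
        rw [hψW]
        exact mul_nonneg hy.1.le (hWnn _)
      have h2 : 0 ≤ ψ n 1 * (2/(n:ℝ)) := mul_nonneg hψ1nn (by positivity)
      linarith
    have hTcap : upperCap Ps {ω | (n:ℝ)*ε ≤ T ω} ≤
        (8 / ε ^ 2) * ((∫ y in Set.Ioc (0:ℝ) 1, ψ n y) + ψ n 1 * (2/(n:ℝ))) := by
      apply upperCap_le hne
      intro P hP
      have h := hcheb P hP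
      have hB : ∑ k ∈ I, (4 * M k) ≤
          8 * ((n:ℝ)^2 * ((∫ y in Set.Ioc (0:ℝ) 1, ψ n y) + ψ n 1 * (2/(n:ℝ)))) := by
        have hs : ∑ k ∈ I, (4 * M k) = 4 * ∑ k ∈ I, M k := by rw [Finset.mul_sum]
        rw [hs]
        have h2 := hsumlayer
        rw [hCoV2, hsplitψ] at h2
        have h3 := hpiece2
        nlinarith [sq_nonneg (n:ℝ), hn0]
      have hfin : ((n:ℝ)*ε)^2 * (P {ω | (n:ℝ)*ε ≤ T ω}).toReal ≤
          ((n:ℝ)*ε)^2 * ((8 / ε ^ 2) * ((∫ y in Set.Ioc (0:ℝ) 1, ψ n y) + ψ n 1 * (2/(n:ℝ)))) := by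
        refine (h.trans hB).trans (le_of_eq ?_)
        field_simp
      exact le_of_mul_le_mul_left hfin (by positivity)
    -- event inclusion
    have hincl : {ω | S n ω / n ≤ μlow n - ε} ⊆
        {ω | (n:ℝ)*ε ≤ T ω} ∪ ⋃ k ∈ I, {ω | (n:ℝ) < |X k ω|} := by
      intro ω hω
      by_cases hcase : ∃ k ∈ I, (n:ℝ) < |X k ω|
      · right
        obtain ⟨k, hk, hk2⟩ := hcase
        exact Set.mem_biUnion hk hk2
      · left
        push_neg at hcase
        have hYX : ∀ k ∈ I, Y n k ω = X k ω := by
          intro k hk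
          simp only [hY]
          rw [hχone n (abs (X k ω)) (by rw [abs_abs]; exact hcase k hk), mul_one]
        have hSY : S n ω = ∑ k ∈ I, Y n k ω := by
          simp only [hS]
          exact (Finset.sum_congr rfl fun k hk => (hYX k hk).symm)
        have hω' : S n ω / (n:ℝ) ≤ μlow n - ε := hω
        rw [hμlow] at hω'
        rw [div_le_iff₀ hn0] at hω'
        have h3 : S n ω ≤ ∑ k ∈ I, μm n k - (n:ℝ)*ε := by
          calc S n ω ≤ ((1/(n:ℝ)) * ∑ k ∈ I, μm n k - ε) * (n:ℝ) := hω'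
            _ = ∑ k ∈ I, μm n k - (n:ℝ)*ε := by field_simp
        show (n:ℝ)*ε ≤ T ω
        simp only [hT, hZ]
        rw [Finset.sum_sub_distrib, ← hSY]
        linarith
    have hsum_caps : ∑ k ∈ I, upperCap Ps {ω | (n:ℝ) < |X k ω|} = ψ n 1 := by
      rw [hψ]
      refine Finset.sum_congr rfl fun k _ => ?_
      rw [one_mul]
      congr 1
      ext ω
      simp [mul_one]
    calc upperCap Ps {ω | S n ω / n ≤ μlow n - ε}
        ≤ upperCap Ps {ω | (n:ℝ)*ε ≤ T ω} + ∑ k ∈ I, upperCap Ps {ω | (n:ℝ) < |X k ω|} :=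
          upperCap_subadd hne hprob hincl
      _ ≤ (8 / ε ^ 2) * ((∫ y in Set.Ioc (0:ℝ) 1, ψ n y) + ψ n 1 * (2/(n:ℝ))) + ψ n 1 :=
          add_le_add hTcap (le_of_eq hsum_caps)
  -- limit part
  haveI hfinr : IsFiniteMeasure (volume.restrict (Set.Icc (0:ℝ) 1)) := by
    constructor
    rw [Measure.restrict_apply_univ, Real.volume_Icc]
    exact ENNReal.ofReal_lt_top
  have hψInt : ∀ m : ℕ, Integrable (ψ m) (volume.restrict (Set.Icc (0:ℝ) 1)) := by
    intro m
    exact (memLp_one_iff_integrable.mp (hUI.memLp m))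
  have hae : ∀ᵐ y ∂(volume.restrict (Set.Icc (0:ℝ) 1)),
      Tendsto (fun m => ψ m y) atTop (nhds ((0 : ℝ → ℝ) y)) := by
    refine (ae_restrict_iff' measurableSet_Icc).mpr (Eventually.of_forall fun y hy => ?_)
    simpa using hψ0 y hy
  have hLp : Tendsto (fun m => eLpNorm ((fun m : ℕ => ψ m) m - (0 : ℝ → ℝ)) 1
      (volume.restrict (Set.Icc (0:ℝ) 1))) atTop (nhds 0) :=
    tendsto_Lp_finite_of_tendsto_ae le_rfl ENNReal.one_ne_top hUI.1
      MemLp.zero hUI.2.1 hae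
  simp only [sub_zero] at hLp
  have hLpr : Tendsto (fun m => (eLpNorm (ψ m) 1 (volume.restrict (Set.Icc (0:ℝ) 1))).toReal)
      atTop (nhds 0) := by
    have := (ENNReal.tendsto_toReal (by simp : (0:ENNReal) ≠ ⊤)).comp hLp
    simpa [Function.comp_def] using this
  have habs_le : ∀ m : ℕ, |∫ y in Set.Ioc (0:ℝ) 1, ψ m y| ≤
      (eLpNorm (ψ m) 1 (volume.restrict (Set.Icc (0:ℝ) 1))).toReal := by
    intro m
    have hi := hψInt m
    have h1 : |∫ y in Set.Ioc (0:ℝ) 1, ψ m y| =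
        |∫ y, ψ m y ∂(volume.restrict (Set.Icc (0:ℝ) 1))| := by
      rw [← integral_Icc_eq_integral_Ioc]
    rw [h1]
    have h2 : |∫ y, ψ m y ∂(volume.restrict (Set.Icc (0:ℝ) 1))| ≤
        ∫ y, |ψ m y| ∂(volume.restrict (Set.Icc (0:ℝ) 1)) := by
      have := norm_integral_le_integral_norm (μ := volume.restrict (Set.Icc (0:ℝ) 1)) (ψ m)
      simpa [Real.norm_eq_abs] using this
    refine h2.trans (le_of_eq ?_)
    rw [eLpNorm_one_eq_lintegral_enorm, ← ofReal_integral_norm_eq_lintegral_enorm hi,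
      ENNReal.toReal_ofReal (integral_nonneg fun y => norm_nonneg _)]
    simp [Real.norm_eq_abs]
  have hc : Tendsto (fun m => ∫ y in Set.Ioc (0:ℝ) 1, ψ m y) atTop (nhds 0) :=
    squeeze_zero_norm (fun m => by rw [Real.norm_eq_abs]; exact habs_le m) hLpr
  have h1' : Tendsto (fun m => ψ m 1) atTop (nhds 0) := hψ0 1 ⟨zero_le_one, le_refl 1⟩
  have h2' : Tendsto (fun m : ℕ => (2:ℝ)/(m:ℝ)) atTop (nhds 0) :=
    tendsto_const_div_atTop_nhds_zero_nat 2
  have hb : Tendsto (fun m =>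
      (8 / ε ^ 2) * ((∫ y in Set.Ioc (0:ℝ) 1, ψ m y) + ψ m 1 * (2/(m:ℝ))) + ψ m 1)
      atTop (nhds 0) := by
    have := ((hc.add (h1'.mul h2')).const_mul (8 / ε ^ 2)).add h1'
    simpa using this
  refine squeeze_zero' ?_ ?_ hb
  · exact Eventually.of_forall fun m => upperCap_nonneg hne hprob _
  · filter_upwards [eventually_ge_atTop 1] with m hm
    exact key m hm
end

section
/- Nonlinear WLLN under the Cesàro negative correlation condition (Remark 3, second bullet): under the standing assumptions, define κ_{n,i,k} := 𝔼[(Y_{n,k} − μ⁺_{n,k})(Y_{n,i} − μ⁺_{n,i})] for i ≠ k, and assume that (1/n²) · max(Σ_{1 ≤ i,k ≤ n, i ≠ k} κ_{n,i,k}, 0) → 0 as n → ∞. Then for every ε > 0, V(S_n/n ≥ μ̄_n + ε) → 0 as n → ∞. -/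
open MeasureTheory Filter

lemma integrable_of_bound {Ω : Type*} [MeasurableSpace Ω] (P : Measure Ω) [IsFiniteMeasure P]
    (f : Ω → ℝ) (hf : Measurable f) (C : ℝ) (hC : ∀ ω, |f ω| ≤ C) : Integrable f P := by
  refine (integrable_const C).mono' hf.aestronglyMeasurable (ae_of_all _ fun ω => ?_)
  simpa [Real.norm_eq_abs] using hC ω

lemma jensen_sq {Ω : Type*} [MeasurableSpace Ω] (P : Measure Ω) [IsProbabilityMeasure P]
    (f : Ω → ℝ) (hf : Integrable f P) (hf2 : Integrable (fun ω => f ω ^ 2) P) :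
    (∫ ω, f ω ∂P) ^ 2 ≤ ∫ ω, f ω ^ 2 ∂P := by
  set a := ∫ ω, f ω ∂P with ha
  have h0 : 0 ≤ ∫ ω, (f ω - a) ^ 2 ∂P := integral_nonneg fun ω => sq_nonneg _
  have hexp : (fun ω => (f ω - a) ^ 2) = fun ω => (f ω ^ 2 - (2 * a) * f ω) + a ^ 2 := by
    funext ω; ring
  have heq : ∫ ω, (f ω - a) ^ 2 ∂P
      = (∫ ω, f ω ^ 2 ∂P) - (2 * a) * (∫ ω, f ω ∂P) + a ^ 2 := by
    rw [hexp]
    have hsub : Integrable (fun ω => f ω ^ 2 - 2 * a * f ω) P := hf2.sub (hf.const_mul (2 * a))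
    rw [integral_add hsub (integrable_const _),
      integral_sub hf2 (hf.const_mul (2 * a)), integral_const_mul, integral_const]
    simp [measure_univ]
  rw [heq, ← ha] at h0
  nlinarith

lemma cheb {Ω : Type*} [MeasurableSpace Ω] (P : Measure Ω) [IsProbabilityMeasure P]
    (T : Ω → ℝ) (hT : Measurable T) (hTi : Integrable (fun ω => T ω ^ 2) P)
    (a : ℝ) (ha : 0 < a) :
    (P {ω | a ≤ T ω}).toReal ≤ (∫ ω, T ω ^ 2 ∂P) / a ^ 2 := by
  have hset : MeasurableSet {ω | a ≤ T ω} := measurableSet_le measurable_const hT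
  have hint : ∫ ω, Set.indicator {ω | a ≤ T ω} (fun _ => a ^ 2) ω ∂P
      = (P {ω | a ≤ T ω}).toReal * a ^ 2 := by
    rw [integral_indicator_const (a ^ 2) hset]; simp [mul_comm, Measure.real]
  have hmono : ∫ ω, Set.indicator {ω | a ≤ T ω} (fun _ => a ^ 2) ω ∂P ≤ ∫ ω, T ω ^ 2 ∂P := by
    refine integral_mono ((integrable_const (a ^ 2)).indicator hset) hTi fun ω => ?_
    by_cases h : ω ∈ {ω | a ≤ T ω}
    · rw [Set.indicator_of_mem h]
      have : a ≤ T ω := h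
      nlinarith
    · rw [Set.indicator_of_notMem h]; positivity
  rw [le_div_iff₀ (by positivity)]
  calc (P {ω | a ≤ T ω}).toReal * a ^ 2 = _ := hint.symm
    _ ≤ _ := hmono

lemma sum_odd (M : ℕ) : ∑ j ∈ Finset.range M, (2 * (j : ℝ) + 1) = (M : ℝ) ^ 2 := by
  induction M with
  | zero => simp
  | succ m ih => rw [Finset.sum_range_succ, ih]; push_cast; ring

lemma sq_le_sum_ind (n : ℕ) (c : ℝ) (h0 : 0 ≤ c) (h1 : c ≤ (n : ℝ) + 1) :
    c ^ 2 ≤ ∑ j ∈ Finset.range (n + 1), (2 * (j : ℝ) + 1) * (if (j : ℝ) ≤ c then 1 else 0) := by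
  set m := min n (Nat.floor c) with hm
  have hsum : ∑ j ∈ Finset.range (n + 1), (2 * (j : ℝ) + 1) * (if (j : ℝ) ≤ c then 1 else 0)
      = ∑ j ∈ Finset.range (m + 1), (2 * (j : ℝ) + 1) := by
    rw [← Finset.sum_subset (Finset.range_subset_range.2 (by omega : m + 1 ≤ n + 1))]
    · refine Finset.sum_congr rfl fun j hj => ?_
      have hj' : j ≤ m := by simpa [Nat.lt_succ_iff] using Finset.mem_range.1 hj
      have : (j : ℝ) ≤ c := by
        have : j ≤ Nat.floor c := le_trans hj' (min_le_right _ _)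
        exact le_trans (Nat.cast_le.2 this) (Nat.floor_le h0)
      simp [this]
    · intro j hj hnj
      have hjn : j ≤ n := by simpa [Nat.lt_succ_iff] using Finset.mem_range.1 hj
      have hjm : m + 1 ≤ j := by
        by_contra h
        exact hnj (Finset.mem_range.2 (by omega))
      have : ¬ ((j : ℝ) ≤ c) := by
        intro hle
        have : j ≤ Nat.floor c := Nat.le_floor hle
        omega
      simp [this]
  rw [hsum, sum_odd]
  have hc : c ≤ (m : ℝ) + 1 := by
    rcases le_or_gt (Nat.floor c) n with h | h
    · have : m = Nat.floor c := by omega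
      rw [this]
      exact (Nat.lt_floor_add_one c).le
    · have : m = n := by omega
      rw [this]; exact h1
  push_cast
  nlinarith
lemma layercake {Ω : Type*} [MeasurableSpace Ω] (P : Measure Ω) [IsProbabilityMeasure P]
    (W : Ω → ℝ) (hW : Measurable W) (n : ℕ) (hn : 1 ≤ n)
    (hWb : ∀ ω, |W ω| ≤ (n : ℝ) + 1)
    (G : ℝ → ℝ) (hGa : Antitone G) (hG0 : ∀ y, 0 ≤ G y)
    (hPG : ∀ i : ℕ, i < n → ∀ y ∈ Set.Icc ((i : ℝ) / n) (((i : ℝ) + 2⁻¹) / n),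
      (P {ω | (i : ℝ) + 1 ≤ |W ω|}).toReal ≤ G y) :
    ∫ ω, W ω ^ 2 ∂P ≤ 1 + 24 * (n : ℝ) ^ 2 * ∫ y in (0 : ℝ)..1, y * G y := by
  have hn0 : (0 : ℝ) < n := by exact_mod_cast hn
  have hInt : ∀ a b : ℝ, IntervalIntegrable (fun y => y * G y) volume a b :=
    fun a b => (hGa.intervalIntegrable).continuousOn_mul continuous_id.continuousOn
  -- measurable sets
  have hset : ∀ j : ℕ, MeasurableSet {ω | (j : ℝ) ≤ |W ω|} :=
    fun j => measurableSet_le measurable_const hW.abs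
  -- step 1 : integral bound by sum of indicators
  have step1 : ∫ ω, W ω ^ 2 ∂P
      ≤ ∑ j ∈ Finset.range (n + 1), (2 * (j : ℝ) + 1) * (P {ω | (j : ℝ) ≤ |W ω|}).toReal := by
    have hIL : Integrable (fun ω => W ω ^ 2) P := by
      refine integrable_of_bound P _ (hW.pow_const 2) (((n : ℝ) + 1) ^ 2) fun ω => ?_
      rw [abs_pow]
      exact pow_le_pow_left₀ (abs_nonneg _) (hWb ω) 2
    have hIR : ∀ j ∈ Finset.range (n + 1), Integrable
        (fun ω => (2 * (j : ℝ) + 1) * Set.indicator {ω | (j : ℝ) ≤ |W ω|} (fun _ => (1 : ℝ)) ω) P :=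
      fun j _ => (((integrable_const (1 : ℝ)).indicator (hset j)).const_mul _)
    have hmono : ∫ ω, W ω ^ 2 ∂P ≤ ∫ ω, ∑ j ∈ Finset.range (n + 1),
        (2 * (j : ℝ) + 1) * Set.indicator {ω | (j : ℝ) ≤ |W ω|} (fun _ => (1 : ℝ)) ω ∂P := by
      refine integral_mono hIL (integrable_finset_sum _ hIR) fun ω => ?_
      have h := sq_le_sum_ind n (|W ω|) (abs_nonneg _) (hWb ω)
      rw [sq_abs] at h
      refine le_trans h (le_of_eq (Finset.sum_congr rfl fun j _ => ?_))
      rw [Set.indicator_apply]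
      simp only [Set.mem_setOf_eq]
    rw [integral_finset_sum _ hIR] at hmono
    refine hmono.trans (le_of_eq (Finset.sum_congr rfl fun j _ => ?_))
    rw [integral_const_mul, integral_indicator_const (1 : ℝ) (hset j)]
    simp [Measure.real]
  -- step 2 : bound each j ≥ 1 term by an integral piece
  have step2 : ∀ i : ℕ, i < n →
      (2 * ((i : ℝ) + 1) + 1) * (P {ω | ((i : ℝ) + 1) ≤ |W ω|}).toReal
        ≤ 24 * (n : ℝ) ^ 2 * ∫ y in ((i : ℝ) / n)..(((i : ℝ) + 1) / n), y * G y := by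
    intro i hi
    set p := (P {ω | ((i : ℝ) + 1) ≤ |W ω|}).toReal with hp
    have hp0 : 0 ≤ p := ENNReal.toReal_nonneg
    have hab : (i : ℝ) / n ≤ ((i : ℝ) + 2⁻¹) / n := by
      apply div_le_div_of_nonneg_right ?_ hn0.le <;> norm_num
    have hbc : ((i : ℝ) + 2⁻¹) / n ≤ ((i : ℝ) + 1) / n := by
      apply div_le_div_of_nonneg_right ?_ hn0.le <;> norm_num
    -- lower bound the small piece
    have hlow : p * ((((i : ℝ) + 2⁻¹) / n) ^ 2 - ((i : ℝ) / n) ^ 2) / 2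
        ≤ ∫ y in ((i : ℝ) / n)..(((i : ℝ) + 2⁻¹) / n), y * G y := by
      have : ∫ y in ((i : ℝ) / n)..(((i : ℝ) + 2⁻¹) / n), p * y
          ≤ ∫ y in ((i : ℝ) / n)..(((i : ℝ) + 2⁻¹) / n), y * G y := by
        refine intervalIntegral.integral_mono_on hab
          ((continuous_const.mul continuous_id).intervalIntegrable _ _) (hInt _ _) fun y hy => ?_
        have hy0 : 0 ≤ y := le_trans (by positivity) hy.1
        have := hPG i hi y hy
        calc p * y = y * p := mul_comm _ _
          _ ≤ y * G y := mul_le_mul_of_nonneg_left this hy0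
      rw [intervalIntegral.integral_const_mul, integral_id] at this
      calc p * ((((i : ℝ) + 2⁻¹) / n) ^ 2 - ((i : ℝ) / n) ^ 2) / 2
          = p * (((((i : ℝ) + 2⁻¹) / n) ^ 2 - ((i : ℝ) / n) ^ 2) / 2) := by ring
        _ ≤ _ := this
    -- extend the piece
    have hext : ∫ y in ((i : ℝ) / n)..(((i : ℝ) + 2⁻¹) / n), y * G y
        ≤ ∫ y in ((i : ℝ) / n)..(((i : ℝ) + 1) / n), y * G y := by
      rw [← intervalIntegral.integral_add_adjacent_intervals (hInt ((i : ℝ) / n) _)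
        (hInt (((i : ℝ) + 2⁻¹) / n) (((i : ℝ) + 1) / n))]
      have : 0 ≤ ∫ y in (((i : ℝ) + 2⁻¹) / n)..(((i : ℝ) + 1) / n), y * G y := by
        refine intervalIntegral.integral_nonneg hbc fun y hy => ?_
        have hy0 : 0 ≤ y := le_trans (by positivity) hy.1
        exact mul_nonneg hy0 (hG0 y)
      linarith
    -- arithmetic
    have harith : (2 * ((i : ℝ) + 1) + 1) * p
        ≤ 24 * (n : ℝ) ^ 2 * (p * ((((i : ℝ) + 2⁻¹) / n) ^ 2 - ((i : ℝ) / n) ^ 2) / 2) := by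
      have hkey : ((((i : ℝ) + 2⁻¹) / n) ^ 2 - ((i : ℝ) / n) ^ 2) = ((i : ℝ) + 4⁻¹) / n ^ 2 := by
        field_simp; ring
      rw [hkey]
      have : 24 * (n : ℝ) ^ 2 * (p * (((i : ℝ) + 4⁻¹) / n ^ 2) / 2) = p * (12 * (i : ℝ) + 3) := by
        field_simp; ring
      rw [this]
      nlinarith
    calc (2 * ((i : ℝ) + 1) + 1) * p ≤ _ := harith
      _ ≤ 24 * (n : ℝ) ^ 2 * ∫ y in ((i : ℝ) / n)..(((i : ℝ) + 1) / n), y * G y := by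
        have h24 : (0 : ℝ) ≤ 24 * (n : ℝ) ^ 2 := by positivity
        exact mul_le_mul_of_nonneg_left (hlow.trans hext) h24
  -- assemble
  have hsum : ∑ i ∈ Finset.range n, ∫ y in ((i : ℝ) / n)..(((i : ℝ) + 1) / n), y * G y
      = ∫ y in (0 : ℝ)..1, y * G y := by
    have := intervalIntegral.sum_integral_adjacent_intervals (μ := volume)
      (a := fun k : ℕ => (k : ℝ) / n) (n := n) (f := fun y => y * G y)
      (fun k _ => hInt _ _)
    simp only [Nat.cast_zero, zero_div] at this
    rw [div_self (ne_of_gt hn0)] at this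
    rw [← this]
    refine Finset.sum_congr rfl fun i _ => ?_
    push_cast
    ring_nf
  calc ∫ ω, W ω ^ 2 ∂P
      ≤ ∑ j ∈ Finset.range (n + 1), (2 * (j : ℝ) + 1) * (P {ω | (j : ℝ) ≤ |W ω|}).toReal := step1
    _ = (2 * ((0 : ℕ) : ℝ) + 1) * (P {ω | (((0 : ℕ) : ℝ)) ≤ |W ω|}).toReal
        + ∑ i ∈ Finset.range n, (2 * ((i : ℝ) + 1) + 1) * (P {ω | ((i : ℝ) + 1) ≤ |W ω|}).toReal := by
      rw [Finset.sum_range_succ' (fun j => (2 * (j : ℝ) + 1) * (P {ω | (j : ℝ) ≤ |W ω|}).toReal) n]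
      rw [add_comm]
      congr 1
      refine Finset.sum_congr rfl fun i _ => ?_
      push_cast
      ring_nf
    _ ≤ 1 + ∑ i ∈ Finset.range n, 24 * (n : ℝ) ^ 2 * ∫ y in ((i : ℝ) / n)..(((i : ℝ) + 1) / n), y * G y := by
      refine add_le_add ?_ (Finset.sum_le_sum fun i hi => step2 i (Finset.mem_range.1 hi))
      have h1 : (P {ω | (((0 : ℕ) : ℝ)) ≤ |W ω|}).toReal ≤ 1 := by
        have h2 : (P {ω | (((0 : ℕ) : ℝ)) ≤ |W ω|}).toReal ≤ (P Set.univ).toReal :=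
          ENNReal.toReal_mono (measure_ne_top _ _) (measure_mono (Set.subset_univ _))
        simpa using h2
      have h0 : 0 ≤ (P {ω | (((0 : ℕ) : ℝ)) ≤ |W ω|}).toReal := ENNReal.toReal_nonneg
      push_cast at h1 h0 ⊢
      linarith
    _ ≤ 1 + 24 * (n : ℝ) ^ 2 * ∫ y in (0 : ℝ)..1, y * G y := by
      rw [← Finset.mul_sum, hsum]

lemma vitali_I (ψ : ℕ → ℝ → ℝ)
    (hψ0 : ∀ y ∈ Set.Icc (0 : ℝ) 1, Tendsto (fun n => ψ n y) atTop (nhds 0))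
    (hUI : UniformIntegrable (fun n : ℕ => ψ n) 1 (volume.restrict (Set.Icc (0 : ℝ) 1))) :
    Tendsto (fun n => ∫ y in (0 : ℝ)..1, ψ n y) atTop (nhds 0) := by
  set μ := volume.restrict (Set.Icc (0 : ℝ) 1) with hμ
  haveI : IsFiniteMeasure μ := by
    constructor
    rw [hμ, Measure.restrict_apply_univ]
    simp [Real.volume_Icc]
  have hmeas : ∀ n, AEStronglyMeasurable (ψ n) μ := fun n => (hUI.memLp n).aestronglyMeasurable
  have hae : ∀ᵐ y ∂μ, Tendsto (fun n => ψ n y) atTop (nhds ((fun _ : ℝ => (0 : ℝ)) y)) := by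
    rw [hμ]
    filter_upwards [ae_restrict_mem measurableSet_Icc] with y hy
    exact hψ0 y hy
  have htm : TendstoInMeasure μ (fun n => ψ n) atTop (fun _ => (0 : ℝ)) :=
    tendstoInMeasure_of_tendsto_ae hmeas hae
  have hLp : Tendsto (fun n => eLpNorm ((fun y => ψ n y) - fun _ => (0 : ℝ)) 1 μ) atTop (nhds 0) :=
    tendsto_Lp_finite_of_tendstoInMeasure le_rfl ENNReal.one_ne_top hmeas
      (memLp_const 0) hUI.2.1 htm
  have hLp' : Tendsto (fun n => (eLpNorm (ψ n) 1 μ).toReal) atTop (nhds 0) := by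
    have h1 : Tendsto (fun n => eLpNorm (ψ n) 1 μ) atTop (nhds 0) := by
      refine hLp.congr fun n => ?_
      congr 1
      funext y
      simp
    have := (ENNReal.tendsto_toReal ENNReal.zero_ne_top).comp h1
    exact this
  refine squeeze_zero_norm (fun n => ?_) hLp'
  have hint : Integrable (ψ n) μ := memLp_one_iff_integrable.1 (hUI.memLp n)
  have h2 : ∫ y in (0 : ℝ)..1, ψ n y = ∫ y, ψ n y ∂μ := by
    rw [intervalIntegral.integral_of_le (zero_le_one), hμ, ← integral_Icc_eq_integral_Ioc]
  rw [h2]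
  have h3 : ‖∫ y, ψ n y ∂μ‖ ≤ ∫ y, ‖ψ n y‖ ∂μ := norm_integral_le_integral_norm _
  have h4 : ∫ y, ‖ψ n y‖ ∂μ = (eLpNorm (ψ n) 1 μ).toReal := by
    rw [eLpNorm_one_eq_lintegral_enorm, ← ofReal_integral_norm_eq_lintegral_enorm hint,
      ENNReal.toReal_ofReal (integral_nonneg fun y => norm_nonneg _)]
  rw [← h4]
  exact h3

/-- nonlinear WLLN under the Cesàro negative correlation condition
(Remark 3, second bullet): if (1/n²)·max(Σ_{i≠k} κ_{n,i,k}, 0) → 0, then for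
every ε > 0, V(Sₙ/n ≥ μ̄ₙ + ε) → 0. -/
theorem nonlinear_wlln_cesaro_negative_correlation
    {Ω : Type*} [MeasurableSpace Ω] (Ps : Set (Measure Ω)) (hne : Ps.Nonempty)
    (hprob : ∀ P ∈ Ps, IsProbabilityMeasure P)
    (X : ℕ → Ω → ℝ) (hX : ∀ k, Measurable (X k))
    (χ : ℕ → ℝ → ℝ)
    (hχLip : ∀ n, ∃ K : NNReal, LipschitzWith K (χ n))
    (hχone : ∀ n : ℕ, ∀ x : ℝ, |x| ≤ (n : ℝ) → χ n x = 1)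
    (hχzero : ∀ n : ℕ, ∀ x : ℝ, (n : ℝ) + 1 ≤ |x| → χ n x = 0)
    (hχrange : ∀ n : ℕ, ∀ x : ℝ, χ n x ∈ Set.Icc (0 : ℝ) 1)
    (Y : ℕ → ℕ → Ω → ℝ) (hY : ∀ n k, Y n k = fun ω => X k ω * χ n |X k ω|)
    (S : ℕ → Ω → ℝ) (hS : ∀ n, S n = fun ω => ∑ k ∈ Finset.Icc 1 n, X k ω)
    (ψ : ℕ → ℝ → ℝ)
    (hψ : ∀ n : ℕ, ∀ y : ℝ, ψ n y = ∑ k ∈ Finset.Icc 1 n, y * upperCap Ps {ω | (n : ℝ) * y < |X k ω|})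
    (hψ0 : ∀ y ∈ Set.Icc (0 : ℝ) 1, Tendsto (fun n => ψ n y) atTop (nhds 0))
    (hUI : UniformIntegrable (fun n : ℕ => ψ n) 1 (volume.restrict (Set.Icc (0 : ℝ) 1)))
    (μp : ℕ → ℕ → ℝ) (hμp : ∀ n k, μp n k = upperExp Ps (Y n k))
    (μbar : ℕ → ℝ) (hμbar : ∀ n : ℕ, μbar n = (1 / (n : ℝ)) * ∑ k ∈ Finset.Icc 1 n, μp n k)
    (κ : ℕ → ℕ → ℕ → ℝ)
    (hκ : ∀ n i k : ℕ, κ n i k = upperExp Ps (fun ω => (Y n k ω - μp n k) * (Y n i ω - μp n i)))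
    (hces : Tendsto (fun n : ℕ => (1 / (n : ℝ) ^ 2) *
      max (∑ i ∈ Finset.Icc 1 n, ∑ k ∈ Finset.Icc 1 n, if i ≠ k then κ n i k else 0) 0)
      atTop (nhds 0))
    :
    ∀ ε : ℝ, 0 < ε →
      Tendsto (fun n => upperCap Ps {ω | μbar n + ε ≤ S n ω / n}) atTop (nhds 0) := by
  intro ε hε
  classical
  haveI hnePs : Nonempty Ps := hne.to_subtype
  -- capacity facts
  have capBdd : ∀ A : Set Ω, BddAbove (Set.range fun P : Ps => ((P : Measure Ω) A).toReal) := by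
    intro A
    refine ⟨1, ?_⟩
    rintro x ⟨P, rfl⟩
    haveI := hprob P P.2
    have h1 : ((P : Measure Ω) A).toReal ≤ ((P : Measure Ω) Set.univ).toReal :=
      ENNReal.toReal_mono (measure_ne_top _ _) (measure_mono (Set.subset_univ _))
    simpa using h1
  have cap_le : ∀ (A : Set Ω) (P : Ps), ((P : Measure Ω) A).toReal ≤ upperCap Ps A :=
    fun A P => le_ciSup (capBdd A) P
  have cap_nonneg : ∀ A : Set Ω, 0 ≤ upperCap Ps A :=
    fun A => Real.iSup_nonneg fun P => ENNReal.toReal_nonneg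
  -- expectation facts
  have expBdd : ∀ (f : Ω → ℝ) (C : ℝ), (∀ P : Ps, |∫ ω, f ω ∂(P : Measure Ω)| ≤ C) →
      BddAbove (Set.range fun P : Ps => ∫ ω, f ω ∂(P : Measure Ω)) := by
    intro f C h
    refine ⟨C, ?_⟩
    rintro x ⟨P, rfl⟩
    exact (abs_le.1 (h P)).2
  have exp_ge : ∀ (f : Ω → ℝ) (C : ℝ), (∀ P : Ps, |∫ ω, f ω ∂(P : Measure Ω)| ≤ C) →
      ∀ P : Ps, ∫ ω, f ω ∂(P : Measure Ω) ≤ upperExp Ps f :=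
    fun f C h P => le_ciSup (expBdd f C h) P
  have exp_abs : ∀ (f : Ω → ℝ) (C : ℝ), (∀ P : Ps, |∫ ω, f ω ∂(P : Measure Ω)| ≤ C) →
      |upperExp Ps f| ≤ C := by
    intro f C h
    have hub : upperExp Ps f ≤ C := ciSup_le fun P => (abs_le.1 (h P)).2
    obtain ⟨P⟩ := hnePs
    have hlb : -C ≤ upperExp Ps f := le_trans (abs_le.1 (h P)).1 (exp_ge f C h P)
    exact abs_le.2 ⟨hlb, hub⟩
  -- basic Y facts
  have hχabs : ∀ n x, |χ n x| ≤ 1 := fun n x =>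
    abs_le.2 ⟨by linarith [(hχrange n x).1], (hχrange n x).2⟩
  have hYmeas : ∀ n k, Measurable (Y n k) := by
    intro n k
    rw [hY]
    exact (hX k).mul ((hχLip n).choose_spec.continuous.measurable.comp (hX k).abs)
  have hYX : ∀ n k ω, |Y n k ω| ≤ |X k ω| := by
    intro n k ω
    rw [hY]
    dsimp only
    rw [abs_mul]
    exact mul_le_of_le_one_right (abs_nonneg _) (hχabs n _)
  have hYb : ∀ n k ω, |Y n k ω| ≤ (n : ℝ) + 1 := by
    intro n k ω
    rcases le_or_gt (|X k ω|) ((n : ℝ) + 1) with h | h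
    · exact (hYX n k ω).trans h
    · rw [hY]
      dsimp only
      rw [hχzero n _ (by rw [abs_abs]; exact h.le), mul_zero, abs_zero]
      positivity
  -- V and J
  set V : ℕ → ℕ → ℝ → ℝ := fun n k y => upperCap Ps {ω | (n : ℝ) * y < |X k ω|} with hV
  have hVanti : ∀ n k, Antitone (V n k) := by
    intro n k y1 y2 h12
    refine ciSup_le fun P => le_trans ?_ (cap_le _ P)
    haveI := hprob P P.2
    refine ENNReal.toReal_mono (measure_ne_top _ _) (measure_mono ?_)
    intro ω hω
    have : (n : ℝ) * y1 ≤ (n : ℝ) * y2 := mul_le_mul_of_nonneg_left h12 (Nat.cast_nonneg n)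
    exact lt_of_le_of_lt this hω
  have hV0 : ∀ n k y, 0 ≤ V n k y := fun n k y => cap_nonneg _
  set J : ℕ → ℕ → ℝ := fun n k => ∫ y in (0 : ℝ)..1, y * V n k y with hJ
  have hJint : ∀ n k (a b : ℝ), IntervalIntegrable (fun y => y * V n k y) volume a b :=
    fun n k a b => ((hVanti n k).intervalIntegrable).continuousOn_mul continuous_id.continuousOn
  have hJ0 : ∀ n k, 0 ≤ J n k := by
    intro n k
    exact intervalIntegral.integral_nonneg zero_le_one fun y hy => mul_nonneg hy.1 (hV0 n k y)
  set c : ℕ → ℕ → ℝ := fun n k => 1 + 24 * (n : ℝ) ^ 2 * J n k with hc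
  have hc0 : ∀ n k, 0 ≤ c n k := by
    intro n k
    have := hJ0 n k
    have : 0 ≤ 24 * (n : ℝ) ^ 2 * J n k := by positivity
    simp only [hc]
    linarith
  -- layercake instantiation : ∫ Y² ≤ c n k for every P ∈ Ps
  have hYsq : ∀ (n k : ℕ), 1 ≤ n → ∀ P : Ps, ∫ ω, (Y n k ω) ^ 2 ∂(P : Measure Ω) ≤ c n k := by
    intro n k hn P
    haveI := hprob P P.2
    refine layercake (P : Measure Ω) (Y n k) (hYmeas n k) n hn (hYb n k)
      (V n k) (hVanti n k) (fun y => hV0 n k y) ?_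
    intro i hi y hy
    refine le_trans ?_ (cap_le _ P)
    refine ENNReal.toReal_mono (measure_ne_top _ _) (measure_mono ?_)
    intro ω hω
    have h1 : (i : ℝ) + 1 ≤ |Y n k ω| := hω
    have hn0 : (0 : ℝ) < n := by exact_mod_cast hn
    have h2 : (n : ℝ) * y ≤ (i : ℝ) + 2⁻¹ := by
      have := hy.2
      calc (n : ℝ) * y ≤ (n : ℝ) * (((i : ℝ) + 2⁻¹) / n) :=
            mul_le_mul_of_nonneg_left this (Nat.cast_nonneg n)
        _ = (i : ℝ) + 2⁻¹ := by field_simp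
    show (n : ℝ) * y < |X k ω|
    calc (n : ℝ) * y ≤ (i : ℝ) + 2⁻¹ := h2
      _ < (i : ℝ) + 1 := by norm_num
      _ ≤ |Y n k ω| := h1
      _ ≤ |X k ω| := hYX n k ω
  -- μp bound : (μp n k)² ≤ c n k
  have hYint : ∀ (n k : ℕ) (P : Ps), Integrable (Y n k) (P : Measure Ω) := by
    intro n k P
    haveI := hprob P P.2
    exact integrable_of_bound _ _ (hYmeas n k) _ (hYb n k)
  have hYsqint : ∀ (n k : ℕ) (P : Ps), Integrable (fun ω => Y n k ω ^ 2) (P : Measure Ω) := by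
    intro n k P
    haveI := hprob P P.2
    refine integrable_of_bound _ _ ((hYmeas n k).pow_const 2) (((n : ℝ) + 1) ^ 2) fun ω => ?_
    rw [abs_pow]
    exact pow_le_pow_left₀ (abs_nonneg _) (hYb n k ω) 2
  have hμsq : ∀ (n k : ℕ), 1 ≤ n → (μp n k) ^ 2 ≤ c n k := by
    intro n k hn
    have habs : ∀ P : Ps, |∫ ω, Y n k ω ∂(P : Measure Ω)| ≤ Real.sqrt (c n k) := by
      intro P
      haveI := hprob P P.2
      refine Real.abs_le_sqrt ?_
      exact le_trans (jensen_sq _ _ (hYint n k P) (hYsqint n k P)) (hYsq n k hn P)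
    have h1 : |μp n k| ≤ Real.sqrt (c n k) := by
      rw [hμp]; exact exp_abs _ _ habs
    calc (μp n k) ^ 2 = |μp n k| ^ 2 := (sq_abs _).symm
      _ ≤ Real.sqrt (c n k) ^ 2 := pow_le_pow_left₀ (abs_nonneg _) h1 2
      _ = c n k := Real.sq_sqrt (hc0 n k)
  -- μp coarse bound
  have hμb : ∀ n k : ℕ, |μp n k| ≤ (n : ℝ) + 1 := by
    intro n k
    rw [hμp]
    refine exp_abs _ _ fun P => ?_
    haveI := hprob P P.2
    have := norm_integral_le_of_norm_le_const (μ := (P : Measure Ω))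
      (f := Y n k) (C := (n : ℝ) + 1) (ae_of_all _ fun ω => by
        rw [Real.norm_eq_abs]; exact hYb n k ω)
    simpa [Real.norm_eq_abs, measure_univ] using this
  -- I and K
  set I : ℕ → ℝ := fun n => ∫ y in (0 : ℝ)..1, ψ n y with hI
  set K : ℕ → ℝ := fun n =>
    max (∑ i ∈ Finset.Icc 1 n, ∑ k ∈ Finset.Icc 1 n, if i ≠ k then κ n i k else 0) 0 with hK
  have hIJ : ∀ n : ℕ, ∑ k ∈ Finset.Icc 1 n, J n k = I n := by
    intro n
    simp only [hI]
    have h1 : ∀ y : ℝ, ψ n y = ∑ k ∈ Finset.Icc 1 n, y * V n k y := fun y => hψ n y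
    have h2 : ∫ y in (0 : ℝ)..1, ψ n y
        = ∫ y in (0 : ℝ)..1, ∑ k ∈ Finset.Icc 1 n, y * V n k y := by
      congr 1
      funext y
      exact h1 y
    rw [h2, intervalIntegral.integral_finset_sum fun k _ => hJint n k 0 1]
  -- MAIN BOUND
  have key : ∀ n : ℕ, 1 ≤ n →
      upperCap Ps {ω | μbar n + ε ≤ S n ω / n}
        ≤ ψ n 1 + (4 * (1 / (n : ℝ)) + 96 * I n + (1 / (n : ℝ) ^ 2) * K n) / ε ^ 2 := by
    intro n hn
    have hn0 : (0 : ℝ) < n := by exact_mod_cast hn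
    refine ciSup_le fun P => ?_
    haveI := hprob P P.2
    set Pm := (P : Measure Ω) with hPm
    set Z : ℕ → Ω → ℝ := fun k ω => Y n k ω - μp n k with hZ
    set T : Ω → ℝ := fun ω => ∑ k ∈ Finset.Icc 1 n, Z k ω with hT
    have hZmeas : ∀ k, Measurable (Z k) := fun k => (hYmeas n k).sub measurable_const
    have hZb : ∀ k ω, |Z k ω| ≤ 2 * ((n : ℝ) + 1) := by
      intro k ω
      have h1 := hYb n k ω
      have h2 := hμb n k
      have h3 : |Z k ω| ≤ |Y n k ω| + |μp n k| := by
        rw [hZ]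
        dsimp only
        exact (abs_sub _ _)
      linarith
    have hTmeas : Measurable T := by
      apply Finset.measurable_sum
      exact fun k _ => hZmeas k
    have hTb : ∀ ω, |T ω| ≤ (n : ℝ) * (2 * ((n : ℝ) + 1)) := by
      intro ω
      calc |T ω| ≤ ∑ k ∈ Finset.Icc 1 n, |Z k ω| := Finset.abs_sum_le_sum_abs _ _
        _ ≤ ∑ k ∈ Finset.Icc 1 n, 2 * ((n : ℝ) + 1) := Finset.sum_le_sum fun k _ => hZb k _
        _ = (n : ℝ) * (2 * ((n : ℝ) + 1)) := by
            rw [Finset.sum_const, Nat.card_Icc]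
            simp [nsmul_eq_mul]
    have hT2int : Integrable (fun ω => T ω ^ 2) Pm := by
      refine integrable_of_bound _ _ (hTmeas.pow_const 2) (((n : ℝ) * (2 * ((n : ℝ) + 1))) ^ 2)
        fun ω => ?_
      rw [abs_pow]
      exact pow_le_pow_left₀ (abs_nonneg _) (hTb ω) 2
    -- set inclusion
    set setA : Set Ω := {ω | μbar n + ε ≤ S n ω / n} with hsetA
    set setB : Set Ω := ⋃ k ∈ Finset.Icc 1 n, {ω | (n : ℝ) * 1 < |X k ω|} with hsetB
    set setC : Set Ω := {ω | (n : ℝ) * ε ≤ T ω} with hsetC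
    have hsub : setA ⊆ setB ∪ setC := by
      intro ω hω
      by_cases hB : ω ∈ setB
      · exact Or.inl hB
      right
      have hXle : ∀ k ∈ Finset.Icc 1 n, |X k ω| ≤ (n : ℝ) := by
        intro k hk
        by_contra h
        push_neg at h
        exact hB (Set.mem_biUnion hk (by simpa [one_mul] using h))
      have hYeq : ∀ k ∈ Finset.Icc 1 n, Y n k ω = X k ω := by
        intro k hk
        rw [hY]
        dsimp only
        rw [hχone n _ (by rw [abs_abs]; exact hXle k hk), mul_one]
      have hTeq : T ω = S n ω - ∑ k ∈ Finset.Icc 1 n, μp n k := by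
        rw [hT, hS]
        dsimp only
        rw [Finset.sum_sub_distrib]
        congr 1
        exact Finset.sum_congr rfl hYeq
      have hSge : (n : ℝ) * (μbar n + ε) ≤ S n ω := by
        have h1 : μbar n + ε ≤ S n ω / n := hω
        rw [le_div_iff₀ hn0] at h1
        linarith [h1]
      have hμsum : (n : ℝ) * μbar n = ∑ k ∈ Finset.Icc 1 n, μp n k := by
        rw [hμbar]
        field_simp
      show (n : ℝ) * ε ≤ T ω
      rw [hTeq, ← hμsum]
      nlinarith [hSge]
    -- measure bounds
    have hBμ : (Pm setB).toReal ≤ ψ n 1 := by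
      have h1 : Pm setB ≤ ∑ k ∈ Finset.Icc 1 n, Pm {ω | (n : ℝ) * 1 < |X k ω|} :=
        measure_biUnion_finset_le _ _
      have h2 : (Pm setB).toReal
          ≤ (∑ k ∈ Finset.Icc 1 n, Pm {ω | (n : ℝ) * 1 < |X k ω|}).toReal :=
        ENNReal.toReal_mono
          (ENNReal.sum_lt_top.mpr fun k _ => measure_lt_top _ _).ne h1
      rw [ENNReal.toReal_sum (fun k _ => measure_ne_top _ _)] at h2
      refine h2.trans ?_
      rw [hψ]
      refine Finset.sum_le_sum fun k _ => ?_
      rw [one_mul]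
      exact cap_le _ P
    have hCμ : (Pm setC).toReal ≤ (∫ ω, T ω ^ 2 ∂Pm) / ((n : ℝ) * ε) ^ 2 :=
      cheb Pm T hTmeas hT2int ((n : ℝ) * ε) (by positivity)
    -- variance bound
    have hZZint : ∀ i k : ℕ, Integrable (fun ω => Z i ω * Z k ω) Pm := by
      intro i k
      refine integrable_of_bound _ _ ((hZmeas i).mul (hZmeas k)) ((2 * ((n : ℝ) + 1)) ^ 2)
        fun ω => ?_
      rw [abs_mul, sq]
      exact mul_le_mul (hZb i ω) (hZb k ω) (abs_nonneg _) (by positivity)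
    have hTexp : ∫ ω, T ω ^ 2 ∂Pm
        = ∑ i ∈ Finset.Icc 1 n, ∑ k ∈ Finset.Icc 1 n, ∫ ω, Z i ω * Z k ω ∂Pm := by
      have h1 : (fun ω => T ω ^ 2)
          = fun ω => ∑ i ∈ Finset.Icc 1 n, ∑ k ∈ Finset.Icc 1 n, Z i ω * Z k ω := by
        funext ω
        rw [sq, hT]
        dsimp only
        rw [Finset.sum_mul_sum]
      rw [h1, integral_finset_sum _ fun i _ => integrable_finset_sum _ fun k _ => hZZint i k]
      exact Finset.sum_congr rfl fun i _ => integral_finset_sum _ fun k _ => hZZint i k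
    have hcross : ∀ i k : ℕ, i ≠ k → ∫ ω, Z i ω * Z k ω ∂Pm ≤ κ n i k := by
      intro i k hik
      have hC : ∀ P' : Ps, |∫ ω, (Y n k ω - μp n k) * (Y n i ω - μp n i) ∂(P' : Measure Ω)|
          ≤ (2 * ((n : ℝ) + 1)) ^ 2 := by
        intro P'
        haveI := hprob P' P'.2
        have := norm_integral_le_of_norm_le_const (μ := (P' : Measure Ω))
          (f := fun ω => (Y n k ω - μp n k) * (Y n i ω - μp n i))
          (C := (2 * ((n : ℝ) + 1)) ^ 2) (ae_of_all _ fun ω => by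
            rw [Real.norm_eq_abs, abs_mul, sq]
            exact mul_le_mul (hZb k ω) (hZb i ω) (abs_nonneg _) (by positivity))
        simpa [Real.norm_eq_abs, measure_univ] using this
      have h2 : ∫ ω, Z i ω * Z k ω ∂Pm
          = ∫ ω, (Y n k ω - μp n k) * (Y n i ω - μp n i) ∂Pm := by
        congr 1
        funext ω
        rw [hZ]
        ring
      rw [h2, hκ]
      exact exp_ge _ _ hC P
    have hdiag : ∀ k : ℕ, 1 ≤ n → ∫ ω, Z k ω * Z k ω ∂Pm ≤ 4 * c n k := by
      intro k hn'
      have hpt : ∀ ω, Z k ω * Z k ω ≤ 2 * Y n k ω ^ 2 + 2 * μp n k ^ 2 := by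
        intro ω
        rw [hZ]
        dsimp only
        nlinarith [sq_nonneg (Y n k ω + μp n k)]
      have hint1 : Integrable (fun ω => 2 * Y n k ω ^ 2 + 2 * (μp n k) ^ 2) Pm :=
        ((hYsqint n k P).const_mul 2).add (integrable_const _)
      have h3 : ∫ ω, Z k ω * Z k ω ∂Pm ≤ ∫ ω, 2 * Y n k ω ^ 2 + 2 * (μp n k) ^ 2 ∂Pm :=
        integral_mono (hZZint k k) hint1 hpt
      have h4 : ∫ ω, 2 * Y n k ω ^ 2 + 2 * (μp n k) ^ 2 ∂Pm
          = 2 * (∫ ω, Y n k ω ^ 2 ∂Pm) + 2 * (μp n k) ^ 2 := by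
        rw [integral_add ((hYsqint n k P).const_mul 2) (integrable_const _),
          integral_const_mul, integral_const]
        simp [measure_univ, hPm]
      have h5 := hYsq n k hn' P
      have h6 := hμsq n k hn'
      rw [h4] at h3
      rw [← hPm] at h5
      linarith
    have hvar : ∫ ω, T ω ^ 2 ∂Pm ≤ (∑ k ∈ Finset.Icc 1 n, 4 * c n k) + K n := by
      rw [hTexp]
      have h1 : ∀ i ∈ Finset.Icc 1 n, ∀ k ∈ Finset.Icc 1 n,
          ∫ ω, Z i ω * Z k ω ∂Pm
            ≤ (if i ≠ k then κ n i k else 0) + (if i = k then ∫ ω, Z i ω * Z i ω ∂Pm else 0) := by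
        intro i _ k _
        by_cases h : i = k
        · subst h
          simp
        · simp only [h, if_neg, ne_eq, not_false_iff, if_true, if_false, add_zero]
          simpa [h] using hcross i k h
      have h2 : ∑ i ∈ Finset.Icc 1 n, ∑ k ∈ Finset.Icc 1 n, ∫ ω, Z i ω * Z k ω ∂Pm
          ≤ ∑ i ∈ Finset.Icc 1 n, ∑ k ∈ Finset.Icc 1 n,
            ((if i ≠ k then κ n i k else 0) + (if i = k then ∫ ω, Z i ω * Z i ω ∂Pm else 0)) :=
        Finset.sum_le_sum fun i hi => Finset.sum_le_sum fun k hk => h1 i hi k hk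
      refine h2.trans ?_
      have h3 : ∑ i ∈ Finset.Icc 1 n, ∑ k ∈ Finset.Icc 1 n,
            ((if i ≠ k then κ n i k else 0) + (if i = k then ∫ ω, Z i ω * Z i ω ∂Pm else 0))
          = (∑ i ∈ Finset.Icc 1 n, ∑ k ∈ Finset.Icc 1 n, if i ≠ k then κ n i k else 0)
            + ∑ i ∈ Finset.Icc 1 n, ∫ ω, Z i ω * Z i ω ∂Pm := by
        rw [← Finset.sum_add_distrib]
        refine Finset.sum_congr rfl fun i hi => ?_
        rw [Finset.sum_add_distrib]
        congr 1
        rw [Finset.sum_ite_eq (Finset.Icc 1 n) i (fun _ => ∫ ω, Z i ω * Z i ω ∂Pm), if_pos hi]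
      rw [h3]
      have h4 : ∑ i ∈ Finset.Icc 1 n, ∑ k ∈ Finset.Icc 1 n, (if i ≠ k then κ n i k else 0) ≤ K n :=
        le_max_left _ _
      have h5 : ∑ i ∈ Finset.Icc 1 n, ∫ ω, Z i ω * Z i ω ∂Pm ≤ ∑ k ∈ Finset.Icc 1 n, 4 * c n k :=
        Finset.sum_le_sum fun i _ => hdiag i hn
      linarith
    -- combine
    have hAB : (Pm setA).toReal ≤ (Pm setB).toReal + (Pm setC).toReal := by
      have h1 : Pm setA ≤ Pm setB + Pm setC :=
        le_trans (measure_mono hsub) (measure_union_le _ _)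
      have h2 := ENNReal.toReal_mono
        (ENNReal.add_ne_top.2 ⟨measure_ne_top _ _, measure_ne_top _ _⟩) h1
      rwa [ENNReal.toReal_add (measure_ne_top _ _) (measure_ne_top _ _)] at h2
    have hsumc : ∑ k ∈ Finset.Icc 1 n, 4 * c n k = 4 * (n : ℝ) + 96 * (n : ℝ) ^ 2 * I n := by
      have h1 : ∀ k : ℕ, 4 * c n k = 4 + 96 * (n : ℝ) ^ 2 * J n k := by
        intro k
        simp only [hc]
        ring
      rw [Finset.sum_congr rfl fun k _ => h1 k, Finset.sum_add_distrib, ← Finset.mul_sum,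
        hIJ n, Finset.sum_const, Nat.card_Icc]
      simp only [nsmul_eq_mul]
      push_cast
      ring
    have hCfinal : (Pm setC).toReal
        ≤ (4 * (1 / (n : ℝ)) + 96 * I n + (1 / (n : ℝ) ^ 2) * K n) / ε ^ 2 := by
      have h1 : (Pm setC).toReal ≤ ((4 * (n : ℝ) + 96 * (n : ℝ) ^ 2 * I n) + K n)
          / ((n : ℝ) * ε) ^ 2 := by
        refine hCμ.trans ?_
        have hd : (0 : ℝ) < ((n : ℝ) * ε) ^ 2 := by positivity
        have h2 : ∫ ω, T ω ^ 2 ∂Pm ≤ (4 * (n : ℝ) + 96 * (n : ℝ) ^ 2 * I n) + K n := by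
          rw [← hsumc]
          exact hvar
        exact div_le_div_of_nonneg_right h2 hd.le
      refine h1.trans (le_of_eq ?_)
      field_simp
    calc (Pm setA).toReal ≤ (Pm setB).toReal + (Pm setC).toReal := hAB
      _ ≤ ψ n 1 + (4 * (1 / (n : ℝ)) + 96 * I n + (1 / (n : ℝ) ^ 2) * K n) / ε ^ 2 :=
        add_le_add hBμ hCfinal
  -- conclusion
  set B : ℕ → ℝ := fun n =>
    ψ n 1 + (4 * (1 / (n : ℝ)) + 96 * I n + (1 / (n : ℝ) ^ 2) * K n) / ε ^ 2 with hB
  have t1 : Tendsto (fun n => ψ n 1) atTop (nhds 0) := hψ0 1 (by norm_num)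
  have t2 : Tendsto (fun n : ℕ => (1 : ℝ) / n) atTop (nhds 0) :=
    tendsto_one_div_atTop_nhds_zero_nat
  have t3 : Tendsto I atTop (nhds 0) := vitali_I ψ hψ0 hUI
  have t4 : Tendsto (fun n : ℕ => (1 / (n : ℝ) ^ 2) * K n) atTop (nhds 0) := hces
  have tB : Tendsto B atTop (nhds (0 + ((4 * 0 + 96 * 0) + 0) / ε ^ 2)) := by
    refine t1.add ?_
    exact (((t2.const_mul 4).add (t3.const_mul 96)).add t4).div_const _
  have tB' : Tendsto B atTop (nhds 0) := by
    have : (0 : ℝ) + ((4 * 0 + 96 * 0) + 0) / ε ^ 2 = 0 := by norm_num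
    rwa [this] at tB
  refine tendsto_of_tendsto_of_tendsto_of_le_of_le' tendsto_const_nhds tB' ?_ ?_
  · exact Eventually.of_forall fun n => cap_nonneg _
  · filter_upwards [eventually_ge_atTop 1] with n hn
    exact key n hn
end
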